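/- arXiv:2009.12291 — 7 statements merged into one kernel-verified Lean document; each statement's English description precedes it below -/
import Mathlib

section
/- Let E be a nonempty finite set, let c : E → ℝ satisfy c(e) > 0 for every e ∈ E, and let U ⊆ ℝ_{≥0}^E be a nonempty closed convex set. Then inf_{u ∈ U} max_{e ∈ E} u(e)/c(e) = sup { inf_{u ∈ U} Σ_{e ∈ E} λ(e)·u(e) : λ ∈ ℝ_{≥0}^E, Σ_{e ∈ E} λ(e)·c(e) = 1 }. (There is no duality gap between the minimum-congestion problem over U and its Lagrangian dual obtained by dualizing the capacity constraints.) -/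
/-- **No duality gap for the minimum-congestion problem.**
`E` is a nonempty finite edge set, `c` strictly positive capacities, and
`U ⊆ ℝ_{≥0}^E` a nonempty closed convex set of feasible reservations.
The infimum of the congestion `max_e u e / c e` over `U` equals the supremum of
the Lagrangian dual values `inf_{u ∈ U} ∑_e λ e * u e` over all `λ ≥ 0` with
`∑_e λ e * c e = 1`. -/
theorem congestion_strong_duality
    {E : Type*} [Fintype E] [Nonempty E]
    (c : E → ℝ) (hc : ∀ e, 0 < c e)
    (U : Set (E → ℝ)) (hUne : U.Nonempty) (hUcl : IsClosed U) (hUconv : Convex ℝ U)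
    (hUnn : ∀ u ∈ U, ∀ e, 0 ≤ u e) :
    sInf ((fun u : E → ℝ => ⨆ e, u e / c e) '' U) =
      sSup {β : ℝ | ∃ lam : E → ℝ, (∀ e, 0 ≤ lam e) ∧ (∑ e, lam e * c e) = 1 ∧
        β = sInf ((fun u : E → ℝ => ∑ e, lam e * u e) '' U)} := by
  classical
  set f : (E → ℝ) → ℝ := fun u => ⨆ e, u e / c e with hf
  have hratio : ∀ u : E → ℝ, ∀ e, u e / c e ≤ f u := by
    intro u e
    exact le_ciSup (f := fun e => u e / c e) (Set.Finite.bddAbove (Set.finite_range _)) e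
  have hfnn : ∀ u ∈ U, 0 ≤ f u := by
    intro u hu
    obtain ⟨e⟩ := ‹Nonempty E›
    exact le_trans (div_nonneg (hUnn u hu e) (hc e).le) (hratio u e)
  have hbdd : BddBelow (f '' U) := ⟨0, by rintro x ⟨u, hu, rfl⟩; exact hfnn u hu⟩
  have hne : (f '' U).Nonempty := hUne.image f
  set α := sInf (f '' U) with hα
  have hαle : ∀ u ∈ U, α ≤ f u := fun u hu => csInf_le hbdd ⟨u, hu, rfl⟩
  set D : Set ℝ := {β : ℝ | ∃ lam : E → ℝ, (∀ e, 0 ≤ lam e) ∧ (∑ e, lam e * c e) = 1 ∧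
        β = sInf ((fun u : E → ℝ => ∑ e, lam e * u e) '' U)} with hD
  -- weak duality
  have hweak : ∀ β ∈ D, β ≤ α := by
    rintro β ⟨lam, hlam0, hlam1, rfl⟩
    refine le_csInf hne ?_
    rintro x ⟨u, hu, rfl⟩
    have h1 : sInf ((fun u : E → ℝ => ∑ e, lam e * u e) '' U) ≤ ∑ e, lam e * u e :=
      csInf_le ⟨0, by
        rintro x ⟨v, hv, rfl⟩
        exact Finset.sum_nonneg fun e _ => mul_nonneg (hlam0 e) (hUnn v hv e)⟩
        ⟨u, hu, rfl⟩
    refine h1.trans ?_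
    have h2 : ∀ e : E, lam e * u e ≤ (lam e * c e) * f u := by
      intro e
      have hce := (hc e).ne'
      have heq : lam e * u e = (lam e * c e) * (u e / c e) := by
        field_simp
      rw [heq]
      exact mul_le_mul_of_nonneg_left (hratio u e) (mul_nonneg (hlam0 e) (hc e).le)
    calc ∑ e, lam e * u e ≤ ∑ e, (lam e * c e) * f u :=
          Finset.sum_le_sum fun e _ => h2 e
    _ = f u := by rw [← Finset.sum_mul, hlam1, one_mul]
  -- D is nonempty
  have hcsum : (0:ℝ) < ∑ e, c e :=
    Finset.sum_pos (fun e _ => hc e) Finset.univ_nonempty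
  have hDne : D.Nonempty := by
    refine ⟨_, fun _ => (∑ e, c e)⁻¹, fun e => by positivity, ?_, rfl⟩
    rw [← Finset.mul_sum, inv_mul_cancel₀ hcsum.ne']
  have hDbdd : BddAbove D := ⟨α, fun β hβ => hweak β hβ⟩
  -- key: for every ε > 0 there is a dual value ≥ α - ε
  have key : ∀ ε : ℝ, 0 < ε → ∃ β ∈ D, α - ε ≤ β := by
    intro ε hε
    set C : Set (E → ℝ) := {u | ∀ e, u e < (α - ε) * c e} with hC
    have hCiInter : C = ⋂ e, {u : E → ℝ | u e < (α - ε) * c e} := by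
      ext u; simp [hC, Set.mem_iInter]
    have hCopen : IsOpen C := by
      rw [hCiInter]
      exact isOpen_iInter_of_finite fun e =>
        isOpen_lt (continuous_apply e) continuous_const
    have hCconv : Convex ℝ C := by
      rw [hCiInter]
      exact convex_iInter fun e =>
        convex_halfSpace_lt (LinearMap.isLinear (LinearMap.proj e)) _
    have hdisj : Disjoint C U := by
      rw [Set.disjoint_left]
      intro u huC huU
      have : f u ≤ α - ε := ciSup_le fun e => by
        have := huC e
        rw [div_le_iff₀ (hc e)]
        linarith
      linarith [hαle u huU]
    obtain ⟨φ, s, hφC, hφU⟩ := geometric_hahn_banach_open hCconv hCopen hUconv hdisj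
    set lam : E → ℝ := fun e => φ (Pi.single e (1:ℝ)) with hlam
    have hrepr : ∀ u : E → ℝ, φ u = ∑ e, lam e * u e := by
      intro u
      have hu : u = ∑ e, u e • (Pi.single e (1:ℝ) : E → ℝ) := by
        funext e'
        simp [Finset.sum_apply, Pi.single_apply]
      conv_lhs => rw [hu]
      rw [map_sum]
      refine Finset.sum_congr rfl fun e _ => ?_
      rw [map_smul]
      simp [hlam, mul_comm]
    -- points of C
    have hmemC : ∀ δ : ℝ, 0 < δ → (fun e => (α - ε) * c e - δ) ∈ C := by
      intro δ hδ e
      simp only [hC, Set.mem_setOf_eq]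
      linarith
    -- lam is nonnegative
    have hlam0 : ∀ e, 0 ≤ lam e := by
      intro e
      by_contra h
      push_neg at h
      set x₀ : E → ℝ := fun e' => (α - ε) * c e' - 1 with hx₀
      have hx₀C : x₀ ∈ C := hmemC 1 one_pos
      set t : ℝ := (s + 1 - φ x₀) / (-lam e) with ht
      have ht0 : 0 < t := div_pos (by linarith [hφC x₀ hx₀C]) (by linarith)
      have hmem : x₀ - t • (Pi.single e (1:ℝ) : E → ℝ) ∈ C := by
        intro e'
        have happ : (x₀ - t • (Pi.single e (1:ℝ) : E → ℝ)) e'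
            = x₀ e' - t * (Pi.single e (1:ℝ) : E → ℝ) e' := by
          simp
        have h1 : 0 ≤ t * (Pi.single e (1:ℝ) : E → ℝ) e' := by
          refine mul_nonneg ht0.le ?_
          rw [Pi.single_apply]
          split <;> norm_num
        have h2 := hx₀C e'
        rw [happ]
        linarith
      have hval : φ (x₀ - t • (Pi.single e (1:ℝ) : E → ℝ)) = φ x₀ - t * lam e := by
        rw [map_sub, map_smul]
        simp [hlam]
      have hlt := hφC _ hmem
      rw [hval] at hlt
      have hne0 : lam e ≠ 0 := ne_of_lt h
      have htlam : t * lam e = -(s + 1 - φ x₀) := by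
        have heq2 : t * lam e = -((s + 1 - φ x₀) * (lam e / lam e)) := by rw [ht]; ring
        rw [heq2, div_self hne0, mul_one]
      rw [htlam] at hlt
      linarith
    -- S := ∑ lam e * c e is positive
    set S : ℝ := ∑ e, lam e * c e with hS
    have hSnn : (0:ℝ) ≤ S := Finset.sum_nonneg fun e _ =>
      mul_nonneg (hlam0 e) (hc e).le
    have hS0 : 0 < S := by
      rcases lt_or_eq_of_le hSnn with h | h
      · exact h
      · exfalso
        have hall : ∀ e, lam e = 0 := by
          intro e
          have := (Finset.sum_eq_zero_iff_of_nonneg fun e _ =>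
            mul_nonneg (hlam0 e) (hc e).le).mp h.symm e (Finset.mem_univ e)
          exact (mul_eq_zero.mp this).resolve_right (hc e).ne'
        obtain ⟨u₀, hu₀⟩ := hUne
        have h1 : s ≤ 0 := by
          have := hφU u₀ hu₀
          rw [hrepr] at this
          simpa [hall] using this
        have h2 : 0 < s := by
          have := hφC _ (hmemC 1 one_pos)
          rw [hrepr] at this
          simpa [hall] using this
        linarith
    -- corner bound : (α - ε) * S ≤ s
    have hcorner : (α - ε) * S ≤ s := by
      set T : ℝ := ∑ e, lam e with hT
      have hT0 : 0 ≤ T := Finset.sum_nonneg fun e _ => hlam0 e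
      by_contra hcon
      push_neg at hcon
      set ε' : ℝ := (α - ε) * S - s with hε'
      have hε'0 : 0 < ε' := by linarith
      set δ : ℝ := ε' / (T + 1) with hδ
      have hδ0 : 0 < δ := div_pos hε'0 (by linarith)
      have hlt := hφC _ (hmemC δ hδ0)
      rw [hrepr] at hlt
      have hcalc : ∑ e, lam e * ((α - ε) * c e - δ) = (α - ε) * S - δ * T := by
        rw [hS, hT, Finset.mul_sum, Finset.mul_sum, ← Finset.sum_sub_distrib]
        exact Finset.sum_congr rfl fun e _ => by ring
      rw [hcalc] at hlt
      have hδT : δ * T ≤ ε' := by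
        rw [hδ, div_mul_eq_mul_div, div_le_iff₀ (by linarith : (0:ℝ) < T + 1)]
        nlinarith
      linarith
    -- normalized multiplier
    refine ⟨_, ⟨fun e => lam e / S, fun e => div_nonneg (hlam0 e) hS0.le, ?_, rfl⟩, ?_⟩
    · have heq : ∑ e, lam e / S * c e = (∑ e, lam e * c e) / S := by
        rw [Finset.sum_div]
        exact Finset.sum_congr rfl fun e _ => by ring
      rw [heq, ← hS, div_self hS0.ne']
    · refine le_csInf (hUne.image _) ?_
      rintro x ⟨u, hu, rfl⟩
      have h1 : ∑ e, lam e / S * u e = (∑ e, lam e * u e) / S := by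
        rw [Finset.sum_div]
        exact Finset.sum_congr rfl fun e _ => by ring
      simp only
      rw [h1, ← hrepr]
      have h2 : s ≤ φ u := hφU u hu
      have h3 : (α - ε) ≤ s / S := by
        rw [le_div_iff₀ hS0]; linarith [hcorner]
      refine h3.trans ?_
      gcongr
  -- combine
  refine le_antisymm ?_ (csSup_le hDne hweak)
  rw [Real.le_sSup_iff hDbdd hDne]
  intro ε' hε'
  obtain ⟨β, hβD, hβ⟩ := key (-ε'/2) (by linarith)
  exact ⟨β, hβD, by linarith⟩
end

section
/- Let E be a nonempty finite set, let c : E → ℝ satisfy c(e) > 0 for every e ∈ E, and let U ⊆ ℝ_{≥0}^E be a nonempty closed convex set. Then the Lagrangian dual of the minimum-congestion problem attains its supremum: there exists λ* ∈ ℝ_{≥0}^E with Σ_{e∈E} λ*(e)·c(e) = 1 such that inf_{u ∈ U} Σ_{e∈E} λ*(e)·u(e) = inf_{u ∈ U} max_{e∈E} u(e)/c(e). -/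
/-- **The Lagrangian dual of the minimum-congestion problem attains its supremum.**
There is a `λ* ≥ 0` with `∑_e λ* e * c e = 1` whose dual value
`inf_{u ∈ U} ∑_e λ* e * u e` equals the optimal congestion
`inf_{u ∈ U} max_e u e / c e`. -/
theorem congestion_dual_attained
    {E : Type*} [Fintype E] [Nonempty E]
    (c : E → ℝ) (hc : ∀ e, 0 < c e)
    (U : Set (E → ℝ)) (hUne : U.Nonempty) (hUcl : IsClosed U) (hUconv : Convex ℝ U)
    (hUnn : ∀ u ∈ U, ∀ e, 0 ≤ u e) :
    ∃ lam : E → ℝ, (∀ e, 0 ≤ lam e) ∧ (∑ e, lam e * c e) = 1 ∧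
      sInf ((fun u : E → ℝ => ∑ e, lam e * u e) '' U) =
        sInf ((fun u : E → ℝ => ⨆ e, u e / c e) '' U) := by
  classical
  set g : (E → ℝ) → ℝ := fun u => ⨆ e, u e / c e with hg
  set θ := sInf (g '' U) with hθdef
  -- every coordinate is bounded by congestion times capacity
  have hbdd : ∀ u ∈ U, ∀ e, u e ≤ g u * c e := by
    intro u hu e
    have h1 : u e / c e ≤ g u :=
      le_ciSup (f := fun e => u e / c e) (Set.Finite.bddAbove (Set.finite_range _)) e
    have := (div_le_iff₀ (hc e)).mp h1
    linarith
  have hgnn : ∀ u ∈ U, 0 ≤ g u := by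
    intro u hu
    have e := Classical.arbitrary E
    have h1 : u e / c e ≤ g u :=
      le_ciSup (f := fun e => u e / c e) (Set.Finite.bddAbove (Set.finite_range _)) e
    have h0 : 0 ≤ u e / c e := div_nonneg (hUnn u hu e) (hc e).le
    linarith
  have hImne : (g '' U).Nonempty := hUne.image g
  have hbb : BddBelow (g '' U) := by
    refine ⟨0, ?_⟩; rintro x ⟨v, hv, rfl⟩; exact hgnn v hv
  have hθ0 : 0 ≤ θ := le_csInf hImne (by rintro x ⟨v, hv, rfl⟩; exact hgnn v hv)
  have hθle : ∀ u ∈ U, θ ≤ g u := fun u hu => csInf_le hbb ⟨u, hu, rfl⟩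
  have happrox : ∀ ε : ℝ, 0 < ε → ∃ u ∈ U, g u < θ + ε := by
    intro ε hε
    obtain ⟨x, hx, hlt⟩ := exists_lt_of_csInf_lt hImne
      (show sInf (g '' U) < θ + ε by rw [← hθdef]; linarith)
    obtain ⟨u, hu, rfl⟩ := hx
    exact ⟨u, hu, hlt⟩
  -- a sufficient condition to conclude
  have key : ∀ lam : E → ℝ, (∀ e, 0 ≤ lam e) → (∑ e, lam e * c e) = 1 →
      (∀ u ∈ U, θ ≤ ∑ e, lam e * u e) →
      sInf ((fun u : E → ℝ => ∑ e, lam e * u e) '' U) = θ := by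
    intro lam hlamnn hlamc hlow
    have hbb2 : BddBelow ((fun u : E → ℝ => ∑ e, lam e * u e) '' U) := by
      refine ⟨θ, ?_⟩; rintro x ⟨v, hv, rfl⟩; exact hlow v hv
    apply le_antisymm
    · apply le_of_forall_pos_le_add
      intro ε hε
      obtain ⟨u, hu, hgu⟩ := happrox ε hε
      have h1 : ∑ e, lam e * u e ≤ g u := by
        calc ∑ e, lam e * u e ≤ ∑ e, lam e * (g u * c e) :=
              Finset.sum_le_sum fun e _ =>
                mul_le_mul_of_nonneg_left (hbdd u hu e) (hlamnn e)
          _ = g u * ∑ e, lam e * c e := by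
              rw [Finset.mul_sum]; exact Finset.sum_congr rfl fun e _ => by ring
          _ = g u := by rw [hlamc, mul_one]
      have h2 : sInf ((fun u : E → ℝ => ∑ e, lam e * u e) '' U) ≤ ∑ e, lam e * u e :=
        csInf_le hbb2 ⟨u, hu, rfl⟩
      linarith
    · exact le_csInf (hUne.image _) (by rintro x ⟨v, hv, rfl⟩; exact hlow v hv)
  rcases eq_or_lt_of_le hθ0 with hθ0' | hθpos
  · -- θ = 0 : take the uniform normalized weights
    have hcsum : 0 < ∑ e, c e :=
      Finset.sum_pos (fun e _ => hc e) Finset.univ_nonempty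
    refine ⟨fun _ => (∑ e, c e)⁻¹, fun e => inv_nonneg.mpr hcsum.le, ?_, ?_⟩
    · rw [← Finset.mul_sum]; exact inv_mul_cancel₀ hcsum.ne'
    · refine key _ (fun e => inv_nonneg.mpr hcsum.le)
        (by rw [← Finset.mul_sum]; exact inv_mul_cancel₀ hcsum.ne') ?_
      intro u hu
      rw [← hθ0']
      exact Finset.sum_nonneg fun e _ =>
        mul_nonneg (inv_nonneg.mpr hcsum.le) (hUnn u hu e)
  · -- θ > 0 : separate U from the open convex set C
    set C : Set (E → ℝ) := {u | ∀ e, u e < θ * c e} with hC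
    have hCopen : IsOpen C := by
      have : C = ⋂ e, {u : E → ℝ | u e < θ * c e} := by
        ext u; simp [hC, Set.mem_iInter]
      rw [this]
      exact isOpen_iInter_of_finite fun e =>
        isOpen_lt (continuous_apply e) continuous_const
    have hCconv : Convex ℝ C := by
      intro x hx y hy a b ha hb hab
      intro e
      have hx' := hx e
      have hy' := hy e
      simp only [Pi.add_apply, Pi.smul_apply, smul_eq_mul]
      rcases eq_or_lt_of_le ha with ha' | ha'
      · have hb1 : b = 1 := by linarith
        rw [← ha', hb1]; linarith
      · have h1 : a * x e < a * (θ * c e) := by nlinarith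
        have h2 : b * y e ≤ b * (θ * c e) := mul_le_mul_of_nonneg_left hy'.le hb
        have h3 : a * (θ * c e) + b * (θ * c e) = θ * c e := by
          rw [← add_mul, hab, one_mul]
        linarith
    have hdisj : Disjoint C U := by
      rw [Set.disjoint_left]
      intro u huC huU
      obtain ⟨e0, he0⟩ := exists_eq_ciSup_of_finite (f := fun e => u e / c e)
      have h1 : g u = u e0 / c e0 := he0.symm
      have h2 : u e0 / c e0 < θ := (div_lt_iff₀ (hc e0)).mpr (by have := huC e0; linarith)
      have := hθle u huU
      linarith [h1 ▸ this]
    obtain ⟨f, s, hfC, hfU⟩ := geometric_hahn_banach_open hCconv hCopen hUconv hdisj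
    set lam0 : E → ℝ := fun e => f (fun j => if e = j then (1 : ℝ) else 0) with hlam0
    have hf : ∀ u : E → ℝ, f u = ∑ e, u e * lam0 e := by
      intro u
      conv_lhs => rw [pi_eq_sum_univ u]
      rw [map_sum]
      exact Finset.sum_congr rfl fun e _ => by rw [map_smul]; rfl
    have h0C : (0 : E → ℝ) ∈ C := by
      intro e; simpa using mul_pos hθpos (hc e)
    have hspos : 0 < s := by have := hfC _ h0C; simpa using this
    have hlam0nn : ∀ e, 0 ≤ lam0 e := by
      intro e
      by_contra hneg
      push_neg at hneg
      set t : ℝ := (|s| + 1) / (-lam0 e) with ht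
      have htpos : 0 < t := div_pos (by positivity) (by linarith)
      have haC : (-t) • (fun j => if e = j then (1 : ℝ) else 0) ∈ C := by
        intro j
        have : (-t) * (if e = j then (1 : ℝ) else 0) ≤ 0 := by
          split <;> nlinarith
        have hθc : 0 < θ * c j := mul_pos hθpos (hc j)
        simpa [Pi.smul_apply, smul_eq_mul] using lt_of_le_of_lt this hθc
      have hlt := hfC _ haC
      rw [map_smul, smul_eq_mul] at hlt
      have hlt' : -t * lam0 e < s := hlt
      have hne : -lam0 e ≠ 0 := ne_of_gt (by linarith)
      have hval : t * (-lam0 e) = |s| + 1 := div_mul_cancel₀ _ hne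
      have heq : -t * lam0 e = |s| + 1 := by rw [← hval]; ring
      have : s ≤ |s| := le_abs_self s
      linarith
    -- the normalization S is positive
    set S : ℝ := ∑ e, lam0 e * c e with hS
    have hSnn : 0 ≤ S := Finset.sum_nonneg fun e _ => mul_nonneg (hlam0nn e) (hc e).le
    have hSpos : 0 < S := by
      rcases hSnn.lt_or_eq with h | h
      · exact h
      · exfalso
        have hall : ∀ e ∈ Finset.univ, lam0 e * c e = 0 :=
          (Finset.sum_eq_zero_iff_of_nonneg
            (fun e _ => mul_nonneg (hlam0nn e) (hc e).le)).mp h.symm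
        have hlz : ∀ e, lam0 e = 0 := by
          intro e
          have := hall e (Finset.mem_univ e)
          exact (mul_eq_zero.mp this).resolve_right (hc e).ne'
        obtain ⟨u0, hu0⟩ := hUne
        have := hfU u0 hu0
        rw [hf u0] at this
        simp [hlz] at this
        linarith
    have hθS : θ * S ≤ s := by
      by_contra hcon
      push_neg at hcon
      obtain ⟨r, hr1, hr2⟩ := exists_between ((div_lt_iff₀ hSpos).mpr hcon)
      have hrC : r • c ∈ C := by
        intro e
        simp only [Pi.smul_apply, smul_eq_mul]
        have := hc e
        nlinarith
      have hlt := hfC _ hrC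
      rw [hf] at hlt
      have hval : (∑ e, (r • c) e * lam0 e) = r * S := by
        rw [hS, Finset.mul_sum]
        exact Finset.sum_congr rfl fun e _ => by
          simp only [Pi.smul_apply, smul_eq_mul]; ring
      rw [hval] at hlt
      have : s < r * S := (div_lt_iff₀ hSpos).mp hr1
      linarith
    refine ⟨fun e => lam0 e / S, fun e => div_nonneg (hlam0nn e) hSpos.le, ?_, ?_⟩
    · have : (∑ e, lam0 e / S * c e) = S / S := by
        rw [Finset.sum_div]
        exact Finset.sum_congr rfl fun e _ => by ring
      rw [this, div_self hSpos.ne']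
    · apply key
      · exact fun e => div_nonneg (hlam0nn e) hSpos.le
      · have : (∑ e, lam0 e / S * c e) = S / S := by
          rw [Finset.sum_div]
          exact Finset.sum_congr rfl fun e _ => by ring
        rw [this, div_self hSpos.ne']
      · intro u hu
        have h1 : s ≤ f u := hfU u hu
        rw [hf] at h1
        have h2 : (∑ e, lam0 e / S * u e) = (∑ e, u e * lam0 e) / S := by
          rw [Finset.sum_div]
          exact Finset.sum_congr rfl fun e _ => by ring
        rw [h2, le_div_iff₀ hSpos]
        linarith
end

section
/- Let E be a nonempty finite set, let c : E → ℝ satisfy c(e) > 0 for every e ∈ E, let U ⊆ ℝ_{≥0}^E be a nonempty closed convex set, and let β* = inf_{u ∈ U} max_{e∈E} u(e)/c(e). Let α ≥ 1, and suppose λ̃ ∈ ℝ_{≥0}^E satisfies Σ_{e∈E} λ̃(e)·c(e) = 1, ũ ∈ U satisfies Σ_{e∈E} λ̃(e)·ũ(e) ≤ α · inf_{u ∈ U} Σ_{e∈E} λ̃(e)·u(e) (i.e. ũ is an α-approximate minimizer of the linear cost λ̃ over U), and β̃ ∈ ℝ satisfies β* ≤ β̃ ≤ Σ_{e∈E} λ̃(e)·ũ(e).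 Then β* ≤ β̃ ≤ α·β*. (Thus the value returned by the cutting-plane algorithm driven by an α-approximation oracle for the linear-cost problem is an α-approximation of the minimum congestion.) -/
/-- **The cutting-plane algorithm driven by an `α`-approximation oracle for the
linear-cost problem returns an `α`-approximation of the minimum congestion.**
Here `β* = inf_{u ∈ U} max_e u e / c e` is the optimal congestion, `λ̃ ≥ 0` is a
cost vector normalized by `∑_e λ̃ e * c e = 1`, `ũ ∈ U` is an `α`-approximate
minimizer of the linear cost `∑_e λ̃ e * u e` over `U`, and
`β* ≤ β̃ ≤ ∑_e λ̃ e * ũ e`.  Then `β* ≤ β̃ ≤ α * β*`. -/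
theorem cutting_plane_alpha_approx
    {E : Type*} [Fintype E] [Nonempty E]
    (c : E → ℝ) (hc : ∀ e, 0 < c e)
    (U : Set (E → ℝ)) (hUne : U.Nonempty) (hUcl : IsClosed U) (hUconv : Convex ℝ U)
    (hUnn : ∀ u ∈ U, ∀ e, 0 ≤ u e)
    (α : ℝ) (hα : 1 ≤ α)
    (lam : E → ℝ) (hlam : ∀ e, 0 ≤ lam e) (hnorm : (∑ e, lam e * c e) = 1)
    (ut : E → ℝ) (hut : ut ∈ U)
    (happrox : (∑ e, lam e * ut e) ≤
      α * sInf ((fun u : E → ℝ => ∑ e, lam e * u e) '' U))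
    (βt : ℝ)
    (hβlow : sInf ((fun u : E → ℝ => ⨆ e, u e / c e) '' U) ≤ βt)
    (hβup : βt ≤ ∑ e, lam e * ut e) :
    sInf ((fun u : E → ℝ => ⨆ e, u e / c e) '' U) ≤ βt ∧
      βt ≤ α * sInf ((fun u : E → ℝ => ⨆ e, u e / c e) '' U) := by
  refine ⟨hβlow, ?_⟩
  -- pointwise: linear cost ≤ congestion
  have key : ∀ u ∈ U, (∑ e, lam e * u e) ≤ ⨆ e, u e / c e := by
    intro u hu
    have hsup : ∀ e, u e / c e ≤ ⨆ e, u e / c e := fun e =>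
      le_ciSup (f := fun e => u e / c e) (Set.Finite.bddAbove (Set.finite_range _)) e
    calc (∑ e, lam e * u e)
        = ∑ e, (lam e * c e) * (u e / c e) := by
          refine Finset.sum_congr rfl fun e _ => ?_
          rw [mul_assoc, mul_div_cancel₀ _ (hc e).ne']
      _ ≤ ∑ e, (lam e * c e) * (⨆ e, u e / c e) := by
          refine Finset.sum_le_sum fun e _ => ?_
          exact mul_le_mul_of_nonneg_left (hsup e)
            (mul_nonneg (hlam e) (hc e).le)
      _ = (∑ e, lam e * c e) * (⨆ e, u e / c e) := by
          rw [← Finset.sum_mul]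
      _ = ⨆ e, u e / c e := by rw [hnorm, one_mul]
  -- linear image is bounded below by 0
  have hbdd : BddBelow ((fun u : E → ℝ => ∑ e, lam e * u e) '' U) := by
    refine ⟨0, ?_⟩
    rintro x ⟨u, hu, rfl⟩
    exact Finset.sum_nonneg fun e _ => mul_nonneg (hlam e) (hUnn u hu e)
  have hinf : sInf ((fun u : E → ℝ => ∑ e, lam e * u e) '' U) ≤
      sInf ((fun u : E → ℝ => ⨆ e, u e / c e) '' U) := by
    refine le_csInf (hUne.image _) ?_
    rintro x ⟨u, hu, rfl⟩
    exact le_trans (csInf_le hbdd ⟨u, hu, rfl⟩) (key u hu)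
  have hα0 : (0:ℝ) ≤ α := le_trans zero_le_one hα
  calc βt ≤ ∑ e, lam e * ut e := hβup
    _ ≤ α * sInf ((fun u : E → ℝ => ∑ e, lam e * u e) '' U) := happrox
    _ ≤ α * sInf ((fun u : E → ℝ => ⨆ e, u e / c e) '' U) :=
        mul_le_mul_of_nonneg_left hinf hα0
end

section
/- Fix ρ ∈ (0,1) and a 3-CNF formula φ with m ≥ 1 clauses over variables x_1,…,x_r. Define the instance (G_1, H_1, D_1): the graph G_1 has vertices s, t and, for each clause index i ∈ {1,…,m}, two internal vertices v_{i,1}, v_{i,2}, with edges e_{i,1} = {s, v_{i,1}}, e_{i,2} = {v_{i,1}, v_{i,2}}, e_{i,3} = {v_{i,2}, t}, every edge having capacity 1; the commodities are h_{i,j} with endpoints the two endpoints of e_{i,j} (for each i,j) together with one commodity h_0 with endpoints s and t; the demand polytope is D_1 = { d ∈ ℝ_{≥0}^{H_1} : there exists ξ ∈ [0,1]^{2r} indexed by the literals with ξ(x_k) + ξ(¬x_k) = 1 for each k, d_{h_{i,j}} = ξ(l_{i,j}) for all i,j, and 0 ≤ d_{h_0} ≤ m(1−ρ) }. Then: (a)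 if val(φ) = 1, the minimum dynamic congestion of (G_1,H_1,D_1) with unit capacities is at least 2 − ρ; and (b) if val(φ) < ρ, the minimum dynamic congestion is at most 1, i.e. the all-ones reservation belongs to U(D_1). -/
open scoped BigOperators

/-- Net flow out of vertex `v` for a single-commodity flow `f` on an undirected
graph whose edges `e` have endpoints `src e` and `dst e`; `f e true` is the flow
on `e` oriented from `src e` to `dst e`, `f e false` the flow on the opposite
orientation. -/
def netOut {V E : Type*} [Fintype E] [DecidableEq V]
    (src dst : E → V) (f : E → Bool → ℝ) (v : V) : ℝ :=
  ∑ e, ((if src e = v then f e true - f e false else 0) +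
        (if dst e = v then f e false - f e true else 0))

/-- `f` is a routing of the demand vector `d` under the reservation `u`:
each commodity flow is nonnegative, conserved at every vertex other than the
endpoints of the commodity, ships a net flow of `d h` out of `s h`, and the
total flow (in both directions) on each edge is at most `u e`. -/
def IsRouting {V E H : Type*} [Fintype E] [Fintype H] [DecidableEq V]
    (src dst : E → V) (s t : H → V) (d : H → ℝ) (u : E → ℝ)
    (f : H → E → Bool → ℝ) : Prop :=
  (∀ h e b, 0 ≤ f h e b) ∧
  (∀ h v, v ≠ s h → v ≠ t h → netOut src dst (f h) v = 0) ∧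
  (∀ h, netOut src dst (f h) (s h) = d h) ∧
  (∀ e, (∑ h, (f h e true + f h e false)) ≤ u e)

/-- `d` is routable under the reservation `u`. -/
def Routable {V E H : Type*} [Fintype E] [Fintype H] [DecidableEq V]
    (src dst : E → V) (s t : H → V) (d : H → ℝ) (u : E → ℝ) : Prop :=
  ∃ f, IsRouting src dst s t d u f


/-- The set of reservations under which every demand vector of `D` is routable. -/
def Uset {V E H : Type*} [Fintype E] [Fintype H] [DecidableEq V]
    (src dst : E → V) (s t : H → V) (D : Set (H → ℝ)) : Set (E → ℝ) :=
  {u | (∀ e, 0 ≤ u e) ∧ ∀ d ∈ D, Routable src dst s t d u}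

/-! ### The instance `(G₁, H₁, D₁)` built from a 3-CNF formula

The 3-CNF formula over variables `x_1, …, x_r` with `m` clauses is encoded by
`lit : Fin m → Fin 3 → Fin r × Bool`, where `lit i j = (k, b)` means that the
literal in position `j` of clause `i` is `x_k` if `b = true` and `¬x_k`
otherwise.  A truth assignment is `a : Fin r → Bool`, and it satisfies the
literal `(k, b)` iff `a k = b`.

Vertices: `Sum.inl false = s`, `Sum.inl true = t`, and `Sum.inr (i, k)` is the
`(k+1)`-st internal vertex `v_{i,k+1}` of the path of clause `i`.
Edges: `(i, j)` is the edge `e_{i,j+1}` of the path of clause `i`.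
Commodities: `none` is `h₀` (from `s` to `t`), `some (i,j)` is `h_{i,j+1}`,
whose endpoints are those of the edge `(i, j)`. -/

/-- Source of edge `(i, j)` of `G₁`. -/
def g1src (m : ℕ) (e : Fin m × Fin 3) : Bool ⊕ (Fin m × Fin 2) :=
  if h : e.2.val = 0 then Sum.inl false
  else Sum.inr (e.1, ⟨e.2.val - 1, by have := e.2.isLt; omega⟩)

/-- Target of edge `(i, j)` of `G₁`. -/
def g1dst (m : ℕ) (e : Fin m × Fin 3) : Bool ⊕ (Fin m × Fin 2) :=
  if h : e.2.val = 2 then Sum.inl true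
  else Sum.inr (e.1, ⟨e.2.val, by have := e.2.isLt; omega⟩)

/-- Source of a commodity of `G₁`. -/
def g1s (m : ℕ) : Option (Fin m × Fin 3) → Bool ⊕ (Fin m × Fin 2)
  | none => Sum.inl false
  | some e => g1src m e

/-- Target of a commodity of `G₁`. -/
def g1t (m : ℕ) : Option (Fin m × Fin 3) → Bool ⊕ (Fin m × Fin 2)
  | none => Sum.inl true
  | some e => g1dst m e

/-- The demand polytope `D₁`: demands are given by fractional literal values
`ξ` with `ξ(x_k) + ξ(¬x_k) = 1`, the demand of `h_{i,j}` equals the value of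
the literal `l_{i,j}`, and `0 ≤ d_{h₀} ≤ m (1 - ρ)`. -/
def D1 (m r : ℕ) (ρ : ℝ) (lit : Fin m → Fin 3 → Fin r × Bool) :
    Set (Option (Fin m × Fin 3) → ℝ) :=
  {d | ∃ ξ : Fin r × Bool → ℝ,
        (∀ l, 0 ≤ ξ l ∧ ξ l ≤ 1) ∧
        (∀ k : Fin r, ξ (k, true) + ξ (k, false) = 1) ∧
        (∀ i j, d (some (i, j)) = ξ (lit i j)) ∧
        0 ≤ d none ∧ d none ≤ (m : ℝ) * (1 - ρ)}

section AuxPotential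

lemma netOut_weighted {V E : Type*} [Fintype E] [DecidableEq V]
    (src dst : E → V) (f : E → Bool → ℝ) (π : V → ℝ) (S : Finset V)
    (hsrc : ∀ e, src e ∈ S) (hdst : ∀ e, dst e ∈ S) :
    ∑ v ∈ S, π v * netOut src dst f v
      = ∑ e, (π (src e) - π (dst e)) * (f e true - f e false) := by
  unfold netOut
  simp only [Finset.mul_sum]
  rw [Finset.sum_comm]
  refine Finset.sum_congr rfl fun e _ => ?_
  have h1 : ∑ v ∈ S, π v *
      ((if src e = v then f e true - f e false else 0) +
        (if dst e = v then f e false - f e true else 0))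
      = (∑ v ∈ S, if src e = v then π v * (f e true - f e false) else 0)
        + (∑ v ∈ S, if dst e = v then π v * (f e false - f e true) else 0) := by
    rw [← Finset.sum_add_distrib]
    refine Finset.sum_congr rfl fun v _ => ?_
    rw [mul_add]
    congr 1 <;> split <;> simp
  rw [h1, Finset.sum_ite_eq S (src e), Finset.sum_ite_eq S (dst e),
    if_pos (hsrc e), if_pos (hdst e)]
  ring

lemma flow_value_bound {V E : Type*} [Fintype E] [DecidableEq V]
    (src dst : E → V) (f : E → Bool → ℝ)
    (hf : ∀ e b, 0 ≤ f e b) (s t : V) (hst : s ≠ t) (d : ℝ)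
    (hcons : ∀ v, v ≠ s → v ≠ t → netOut src dst f v = 0)
    (hs : netOut src dst f s = d) (π : V → ℝ) :
    d * (π t - π s) ≤ ∑ e, |π (dst e) - π (src e)| * (f e true + f e false) := by
  classical
  set S : Finset V := ((Finset.univ.image src ∪ Finset.univ.image dst) ∪ {s, t}) with hS
  have hsrc : ∀ e, src e ∈ S := fun e => by
    simp [hS, Finset.mem_union, Finset.mem_image]
  have hdst : ∀ e, dst e ∈ S := fun e => by
    simp [hS, Finset.mem_union, Finset.mem_image]
  have hsub : ({s, t} : Finset V) ⊆ S := by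
    intro x hx; simp only [Finset.mem_insert, Finset.mem_singleton] at hx
    rcases hx with rfl | rfl <;> simp [hS]
  have key : ∀ ρ : V → ℝ, ρ s * d + ρ t * netOut src dst f t
      = ∑ e, (ρ (src e) - ρ (dst e)) * (f e true - f e false) := by
    intro ρ
    rw [← netOut_weighted src dst f ρ S hsrc hdst]
    rw [← Finset.sum_subset hsub (fun x hx hxn => by
      rw [hcons x, mul_zero]
      · intro h; exact hxn (by simp [h])
      · intro h; exact hxn (by simp [h]))]
    rw [Finset.sum_pair hst, hs]
  have h0 : netOut src dst f t = -d := by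
    have := key (fun _ => 1)
    simp only [one_mul, sub_self, zero_mul, Finset.sum_const_zero] at this
    linarith
  have h1 := key π
  rw [h0] at h1
  have h2 : d * (π t - π s) = ∑ e, (π (dst e) - π (src e)) * (f e true - f e false) := by
    have h3 : ∑ e, (π (dst e) - π (src e)) * (f e true - f e false)
        = -∑ e, (π (src e) - π (dst e)) * (f e true - f e false) := by
      rw [← Finset.sum_neg_distrib]; exact Finset.sum_congr rfl fun e _ => by ring
    rw [h3, ← h1]; ring
  rw [h2]
  refine Finset.sum_le_sum fun e _ => ?_
  calc (π (dst e) - π (src e)) * (f e true - f e false)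
      ≤ |(π (dst e) - π (src e)) * (f e true - f e false)| := le_abs_self _
    _ = |π (dst e) - π (src e)| * |f e true - f e false| := abs_mul _ _
    _ ≤ |π (dst e) - π (src e)| * (f e true + f e false) := by
        refine mul_le_mul_of_nonneg_left ?_ (abs_nonneg _)
        rw [abs_sub_le_iff]
        constructor <;> nlinarith [hf e true, hf e false]

lemma netOut_single {V E : Type*} [Fintype E] [DecidableEq V] [DecidableEq E]
    (src dst : E → V) (p : E) (c : ℝ) (v : V) :
    netOut src dst (fun e b => if e = p ∧ b = true then c else 0) v
      = (if src p = v then c else 0) - (if dst p = v then c else 0) := by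
  unfold netOut
  rw [Finset.sum_eq_single p]
  · simp only [and_true, and_false, if_pos rfl]
    norm_num
    split_ifs <;> ring
  · intro e _ he
    simp [he]
  · intro h; exact absurd (Finset.mem_univ p) h

end AuxPotential

lemma sum_prod_bool : ∀ (r : ℕ) (g : Fin r → Bool → ℝ),
    ∑ a : Fin r → Bool, ∏ k, g k (a k) = ∏ k, (g k true + g k false) := by
  intro r
  induction r with
  | zero => intro g; simp
  | succ n ih =>
    intro g
    rw [← ((Fin.consEquiv (fun _ : Fin (n+1) => Bool)).sum_comp
      (fun a => ∏ k, g k (a k)))]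
    rw [Fintype.sum_prod_type]
    calc ∑ b : Bool, ∑ a' : Fin n → Bool,
          ∏ k, g k ((Fin.consEquiv (fun _ : Fin (n+1) => Bool)) (b, a') k)
        = ∑ b : Bool, ∑ a' : Fin n → Bool, g 0 b * ∏ k : Fin n, g k.succ (a' k) := by
          refine Finset.sum_congr rfl fun b _ => Finset.sum_congr rfl fun a' _ => ?_
          rw [Fin.prod_univ_succ]
          simp [Fin.consEquiv]
      _ = (g 0 true + g 0 false) * ∏ k : Fin n, (g k.succ true + g k.succ false) := by
          simp only [← Finset.mul_sum, ih (fun k b => g k.succ b)]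
          rw [Fintype.sum_bool]; ring
      _ = ∏ k, (g k true + g k false) := by rw [Fin.prod_univ_succ]

lemma marginal (r : ℕ) (ξ : Fin r × Bool → ℝ)
    (hsum : ∀ k, ξ (k, true) + ξ (k, false) = 1) (k₀ : Fin r) (b : Bool) :
    ∑ a ∈ Finset.univ.filter (fun a : Fin r → Bool => a k₀ = b),
      ∏ k, ξ (k, a k) = ξ (k₀, b) := by
  rw [Finset.sum_filter]
  have h1 : ∀ a : Fin r → Bool, (if a k₀ = b then ∏ k, ξ (k, a k) else 0)
      = ∏ k, (fun k x => if k = k₀ then (if x = b then ξ (k₀, b) else 0) else ξ (k, x)) k (a k) := by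
    intro a
    by_cases h : a k₀ = b
    · rw [if_pos h]
      refine Finset.prod_congr rfl fun k _ => ?_
      by_cases hk : k = k₀
      · subst hk; simp [if_pos h, h]
      · simp [hk]
    · rw [if_neg h]
      symm
      exact Finset.prod_eq_zero (Finset.mem_univ k₀) (by simp [h])
  simp only [h1]
  rw [sum_prod_bool r (fun k x => if k = k₀ then if x = b then ξ (k₀, b) else 0 else ξ (k, x))]
  have h2 : ∀ k : Fin r, ((if k = k₀ then (if true = b then ξ (k₀, b) else 0) else ξ (k, true))
      + (if k = k₀ then (if false = b then ξ (k₀, b) else 0) else ξ (k, false)))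
      = if k = k₀ then ξ (k₀, b) else 1 := by
    intro k; by_cases hk : k = k₀ <;> cases b <;> simp [hk, hsum k]
  simp only [h2]
  simp [Finset.prod_ite_eq' Finset.univ k₀ (fun _ => ξ (k₀, b))]


section G1Aux

lemma g1src0 (m : ℕ) (i : Fin m) : g1src m (i, 0) = Sum.inl false := rfl
lemma g1src1 (m : ℕ) (i : Fin m) : g1src m (i, 1) = Sum.inr (i, 0) := rfl
lemma g1src2 (m : ℕ) (i : Fin m) : g1src m (i, 2) = Sum.inr (i, 1) := rfl
lemma g1dst0 (m : ℕ) (i : Fin m) : g1dst m (i, 0) = Sum.inr (i, 0) := rfl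
lemma g1dst1 (m : ℕ) (i : Fin m) : g1dst m (i, 1) = Sum.inr (i, 1) := rfl
lemma g1dst2 (m : ℕ) (i : Fin m) : g1dst m (i, 2) = Sum.inl true := rfl

lemma g1_ne (m : ℕ) (e : Fin m × Fin 3) : g1src m e ≠ g1dst m e := by
  obtain ⟨i, j⟩ := e
  obtain ⟨jv, hv⟩ := j
  interval_cases jv <;> simp [g1src, g1dst, Fin.ext_iff]

def pot {m : ℕ} (j : Fin m → Fin 3) : Bool ⊕ (Fin m × Fin 2) → ℝ
  | Sum.inl b => if b then 1 else 0
  | Sum.inr p => if (j p.1).val ≤ p.2.val then 1 else 0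

lemma pot_diff {m : ℕ} (j : Fin m → Fin 3) (i : Fin m) (jj : Fin 3) :
    pot j (g1dst m (i, jj)) - pot j (g1src m (i, jj))
      = if jj = j i then 1 else 0 := by
  have hj := (j i).isLt
  obtain ⟨jv, hv⟩ := jj
  have h : (j i).val = 0 ∨ (j i).val = 1 ∨ (j i).val = 2 := by omega
  rcases h with h | h | h <;> interval_cases jv <;>
    norm_num [g1src, g1dst, pot, Fin.ext_iff, h]

/-- net flow of the `h₀`-type routing sending `x i` along path `i`. -/
lemma netA_inr (m : ℕ) (x : Fin m → ℝ) (i : Fin m) (k : Fin 2) :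
    netOut (g1src m) (g1dst m) (fun e b => if b then x e.1 else 0) (Sum.inr (i, k)) = 0 := by
  unfold netOut
  rw [Fintype.sum_prod_type]
  refine Finset.sum_eq_zero fun i' _ => ?_
  rw [Fin.sum_univ_three]
  simp only [g1src0, g1src1, g1src2, g1dst0, g1dst1, g1dst2]
  obtain ⟨kv, hk⟩ := k
  by_cases hii : i' = i <;>
    interval_cases kv <;>
      simp [hii, Fin.ext_iff, Prod.ext_iff]

lemma netA_s (m : ℕ) (x : Fin m → ℝ) :
    netOut (g1src m) (g1dst m) (fun e b => if b then x e.1 else 0) (Sum.inl false)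
      = ∑ i, x i := by
  unfold netOut
  rw [Fintype.sum_prod_type]
  refine Finset.sum_congr rfl fun i' _ => ?_
  rw [Fin.sum_univ_three]
  simp only [g1src0, g1src1, g1src2, g1dst0, g1dst1, g1dst2]
  simp

end G1Aux

/-- **Gap construction, base case (`γ = 1`).**
With unit capacities on all edges:
(a) if the formula is satisfiable, every feasible reservation for `D₁` has
congestion at least `2 - ρ = 1 + (1 - ρ)`;
(b) if every truth assignment satisfies fewer than `ρ·m` clauses, the all-ones
reservation is feasible for `D₁`, i.e. the minimum congestion is at most `1`. -/
theorem gap_reduction_base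
    (ρ : ℝ) (hρ0 : 0 < ρ) (hρ1 : ρ < 1)
    (m r : ℕ) (hm : 1 ≤ m) (lit : Fin m → Fin 3 → Fin r × Bool) :
    ((∃ a : Fin r → Bool, ∀ i : Fin m, ∃ j : Fin 3, a (lit i j).1 = (lit i j).2) →
      ∀ u ∈ Uset (g1src m) (g1dst m) (g1s m) (g1t m) (D1 m r ρ lit),
        2 - ρ ≤ ⨆ e : Fin m × Fin 3, u e / 1) ∧
    ((∀ a : Fin r → Bool,
        ((Finset.univ.filter
          (fun i : Fin m => ∃ j : Fin 3, a (lit i j).1 = (lit i j).2)).card : ℝ)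
          < ρ * m) →
      (fun _ : Fin m × Fin 3 => (1 : ℝ)) ∈
        Uset (g1src m) (g1dst m) (g1s m) (g1t m) (D1 m r ρ lit)) := by
  constructor
  · -- part (a)
    rintro ⟨a, ha⟩ u hu
    choose j hj using ha
    set ξ : Fin r × Bool → ℝ := fun l => if a l.1 = l.2 then 1 else 0 with hξ
    set d : Option (Fin m × Fin 3) → ℝ := fun h => match h with
      | none => (m : ℝ) * (1 - ρ)
      | some p => ξ (lit p.1 p.2) with hd
    have hmem : d ∈ D1 m r ρ lit := by
      refine ⟨ξ, fun l => ?_, fun k => ?_, fun i jj => rfl, ?_, le_refl _⟩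
      · constructor <;> simp only [hξ] <;> split <;> norm_num
      · simp only [hξ]; cases hak : a k <;> simp [hak]
      · exact mul_nonneg (Nat.cast_nonneg m) (by linarith)
    obtain ⟨f, hf0, hfc, hfs, hfcap⟩ := hu.2 d hmem
    have key : ∀ h, d h * (pot j (g1t m h) - pot j (g1s m h))
        ≤ ∑ e, |pot j (g1dst m e) - pot j (g1src m e)| * (f h e true + f h e false) := by
      intro h
      refine flow_value_bound _ _ _ (hf0 h) _ _ ?_ _ (hfc h) (hfs h) (pot j)
      cases h with
      | none => simp [g1s, g1t]
      | some p => exact g1_ne m p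
    have hsum := Finset.sum_le_sum (fun h (_ : h ∈ Finset.univ) => key h)
    have habs : ∀ e : Fin m × Fin 3, |pot j (g1dst m e) - pot j (g1src m e)|
        = if e.2 = j e.1 then 1 else 0 := by
      intro e
      obtain ⟨i, jj⟩ := e
      rw [abs_eq_self.2 (by rw [pot_diff]; split <;> norm_num), pot_diff]
    have hRHS : ∑ h : Option (Fin m × Fin 3),
        ∑ e, |pot j (g1dst m e) - pot j (g1src m e)| * (f h e true + f h e false)
        ≤ ∑ i, u (i, j i) := by
      rw [Finset.sum_comm]
      calc ∑ e, ∑ h : Option (Fin m × Fin 3),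
            |pot j (g1dst m e) - pot j (g1src m e)| * (f h e true + f h e false)
          = ∑ e, |pot j (g1dst m e) - pot j (g1src m e)|
              * ∑ h : Option (Fin m × Fin 3), (f h e true + f h e false) := by
            exact Finset.sum_congr rfl fun e _ => (Finset.mul_sum _ _ _).symm
        _ ≤ ∑ e, |pot j (g1dst m e) - pot j (g1src m e)| * u e := by
            exact Finset.sum_le_sum fun e _ =>
              mul_le_mul_of_nonneg_left (hfcap e) (abs_nonneg _)
        _ = ∑ e : Fin m × Fin 3, (if e.2 = j e.1 then 1 else 0) * u e := by
            refine Finset.sum_congr rfl fun e _ => by rw [habs]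
        _ = ∑ i, u (i, j i) := by
            rw [Fintype.sum_prod_type]
            refine Finset.sum_congr rfl fun i _ => ?_
            have : ∀ jj : Fin 3, (if jj = j i then (1:ℝ) else 0) * u (i, jj)
                = if jj = j i then u (i, jj) else 0 := fun jj => by split <;> ring
            simp only [this]
            rw [Finset.sum_ite_eq' Finset.univ (j i) (fun jj => u (i, jj))]
            simp
    have hLHS : ((m : ℝ) * (1 - ρ)) + m = ∑ h : Option (Fin m × Fin 3),
        d h * (pot j (g1t m h) - pot j (g1s m h)) := by
      rw [Fintype.sum_option]
      have h0 : d none * (pot j (g1t m none) - pot j (g1s m none)) = (m:ℝ) * (1 - ρ) := by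
        simp [g1s, g1t, pot, hd]
      have h1 : ∑ p : Fin m × Fin 3,
          d (some p) * (pot j (g1t m (some p)) - pot j (g1s m (some p))) = m := by
        rw [Fintype.sum_prod_type]
        have hterm : ∀ (i : Fin m) (jj : Fin 3),
            d (some (i, jj)) * (pot j (g1t m (some (i, jj))) - pot j (g1s m (some (i, jj))))
            = if jj = j i then d (some (i, jj)) else 0 := by
          intro i jj
          show d (some (i, jj)) * (pot j (g1dst m (i, jj)) - pot j (g1src m (i, jj))) = _
          rw [pot_diff]; split <;> ring
        calc ∑ i, ∑ jj, d (some (i, jj))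
              * (pot j (g1t m (some (i, jj))) - pot j (g1s m (some (i, jj))))
            = ∑ i, ∑ jj, if jj = j i then d (some (i, jj)) else 0 := by
              exact Finset.sum_congr rfl fun i _ => Finset.sum_congr rfl fun jj _ => hterm i jj
          _ = ∑ i : Fin m, d (some (i, j i)) := by
              refine Finset.sum_congr rfl fun i _ => ?_
              rw [Finset.sum_ite_eq' Finset.univ (j i) (fun jj => d (some (i, jj)))]
              simp
          _ = ∑ i : Fin m, (1 : ℝ) := by
              refine Finset.sum_congr rfl fun i _ => ?_
              show ξ (lit i (j i)) = 1
              rw [hξ]; simp [hj i]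
          _ = m := by simp
      rw [h0, h1]
    have hfinal : (m : ℝ) * (2 - ρ) ≤ ∑ i, u (i, j i) := by
      have := le_trans hsum hRHS
      rw [← hLHS] at this
      nlinarith [this]
    have hne : (Finset.univ : Finset (Fin m)).Nonempty := by
      refine ⟨⟨0, hm⟩, Finset.mem_univ _⟩
    obtain ⟨i, -, hi⟩ := Finset.exists_le_of_sum_le (f := fun _ : Fin m => 2 - ρ)
      (g := fun i : Fin m => u (i, j i)) hne (by
        rw [Finset.sum_const, Finset.card_univ, Fintype.card_fin, nsmul_eq_mul]
        exact hfinal)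
    have hb : BddAbove (Set.range fun e : Fin m × Fin 3 => u e / 1) :=
      (Set.finite_range _).bddAbove
    calc 2 - ρ ≤ u (i, j i) := hi
      _ = u (i, j i) / 1 := (div_one _).symm
      _ ≤ ⨆ e : Fin m × Fin 3, u e / 1 := le_ciSup hb (i, j i)
  · -- part (b)
    intro hval
    refine ⟨fun e => zero_le_one, ?_⟩
    rintro d ⟨ξ, hξ01, hξsum, hdsome, hd0, hdle⟩
    set w : (Fin r → Bool) → ℝ := fun a => ∏ k, ξ (k, a k) with hw
    have hw0 : ∀ a, 0 ≤ w a := fun a => Finset.prod_nonneg fun k _ => (hξ01 _).1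
    have hswa : ∑ a, w a = 1 := by
      rw [hw]
      rw [sum_prod_bool r (fun k b => ξ (k, b))]
      simp [hξsum]
    set sv : Fin m → ℝ := fun i => ∑ a ∈ Finset.univ.filter
      (fun a : Fin r → Bool => ∃ jj : Fin 3, a (lit i jj).1 = (lit i jj).2), w a with hsv
    have hsv0 : ∀ i, 0 ≤ sv i := fun i => Finset.sum_nonneg fun a _ => hw0 a
    have hsv1 : ∀ i, sv i ≤ 1 := fun i => by
      rw [← hswa]
      exact Finset.sum_le_sum_of_subset_of_nonneg (Finset.filter_subset _ _)
        (fun a _ _ => hw0 a)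
    have hξle : ∀ i jj, ξ (lit i jj) ≤ sv i := by
      intro i jj
      have hsub : Finset.univ.filter
          (fun a : Fin r → Bool => a (lit i jj).1 = (lit i jj).2)
          ⊆ Finset.univ.filter
          (fun a : Fin r → Bool => ∃ jj' : Fin 3, a (lit i jj').1 = (lit i jj').2) := by
        intro a haa
        simp only [Finset.mem_filter, Finset.mem_univ, true_and] at *
        exact ⟨jj, haa⟩
      have hmarg := marginal r ξ hξsum (lit i jj).1 (lit i jj).2
      rw [Prod.mk.eta] at hmarg
      rw [← hmarg]
      exact Finset.sum_le_sum_of_subset_of_nonneg hsub (fun a _ _ => hw0 a)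
    have hS : ∑ i, sv i ≤ ρ * m := by
      calc ∑ i, sv i
          = ∑ i : Fin m, ∑ a : Fin r → Bool,
            if ∃ jj : Fin 3, a (lit i jj).1 = (lit i jj).2 then w a else 0 := by
            exact Finset.sum_congr rfl fun i _ => Finset.sum_filter _ _
        _ = ∑ a : Fin r → Bool, ∑ i : Fin m,
            if ∃ jj : Fin 3, a (lit i jj).1 = (lit i jj).2 then w a else 0 :=
            Finset.sum_comm
        _ = ∑ a : Fin r → Bool,
            ((Finset.univ.filter
              (fun i : Fin m => ∃ jj : Fin 3, a (lit i jj).1 = (lit i jj).2)).card : ℝ) * w a := by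
            refine Finset.sum_congr rfl fun a _ => ?_
            rw [← Finset.sum_filter, Finset.sum_const, nsmul_eq_mul]
        _ ≤ ∑ a : Fin r → Bool, (ρ * m) * w a := by
            exact Finset.sum_le_sum fun a _ =>
              mul_le_mul_of_nonneg_right (le_of_lt (hval a)) (hw0 a)
        _ = ρ * m := by rw [← Finset.mul_sum, hswa, mul_one]
    set T : ℝ := (m : ℝ) - ∑ i, sv i with hT
    have hm1 : (1 : ℝ) ≤ m := by exact_mod_cast hm
    have hTge : (m : ℝ) * (1 - ρ) ≤ T := by
      rw [hT]; nlinarith [hS]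
    have hTpos : 0 < T := lt_of_lt_of_le (by nlinarith) hTge
    set x : Fin m → ℝ := fun i => d none * (1 - sv i) / T with hx
    have hx0 : ∀ i, 0 ≤ x i := fun i =>
      div_nonneg (mul_nonneg hd0 (by linarith [hsv1 i])) hTpos.le
    have hsumT : ∑ i : Fin m, (1 - sv i) = T := by
      rw [Finset.sum_sub_distrib, Finset.sum_const, Finset.card_univ, Fintype.card_fin,
        nsmul_eq_mul, mul_one, hT]
    have hxsum : ∑ i, x i = d none := by
      rw [hx]
      rw [← Finset.sum_div, ← Finset.mul_sum, hsumT, mul_div_assoc,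
        div_self hTpos.ne', mul_one]
    have hxle : ∀ i, x i ≤ 1 - sv i := by
      intro i
      rw [hx, div_le_iff₀ hTpos]
      have h1 : d none ≤ T := le_trans hdle hTge
      nlinarith [hsv1 i, hd0, hsv0 i]
    refine ⟨fun h => match h with
      | none => fun e b => if b then x e.1 else 0
      | some p => fun e b => if e = p ∧ b = true then ξ (lit p.1 p.2) else 0, ?_, ?_, ?_, ?_⟩
    · rintro (_ | p) e b
      · dsimp only; split
        · exact hx0 e.1
        · exact le_refl 0
      · dsimp only; split
        · exact (hξ01 _).1
        · exact le_refl 0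
    · rintro (_ | p) v hv1 hv2
      · rcases v with b | ⟨i, k⟩
        · cases b
          · exact absurd rfl hv1
          · exact absurd rfl hv2
        · exact netA_inr m x i k
      · obtain ⟨p1, p2⟩ := p
        rw [netOut_single (g1src m) (g1dst m) (p1, p2) (ξ (lit p1 p2)) v]
        rw [if_neg (fun hc => hv1 hc.symm), if_neg (fun hc => hv2 hc.symm)]
        ring
    · rintro (_ | p)
      · show netOut (g1src m) (g1dst m) _ (Sum.inl false) = d none
        rw [netA_s m x, hxsum]
      · obtain ⟨p1, p2⟩ := p
        show netOut (g1src m) (g1dst m) _ (g1src m (p1, p2)) = d (some (p1, p2))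
        rw [netOut_single (g1src m) (g1dst m) (p1, p2) (ξ (lit p1 p2)) (g1src m (p1, p2))]
        rw [if_pos rfl, if_neg (fun hc => g1_ne m (p1, p2) hc.symm)]
        rw [hdsome p1 p2]
        ring
    · intro e
      rw [Fintype.sum_option]
      have hsome : ∀ p : Fin m × Fin 3,
          ((if e = p ∧ (true : Bool) = true then ξ (lit p.1 p.2) else 0)
            + (if e = p ∧ (false : Bool) = true then ξ (lit p.1 p.2) else 0))
          = if e = p then ξ (lit p.1 p.2) else 0 := by
        intro p; simp
      calc (if (true : Bool) then x e.1 else 0) + (if (false : Bool) then x e.1 else 0)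
            + ∑ p : Fin m × Fin 3,
              ((if e = p ∧ (true : Bool) = true then ξ (lit p.1 p.2) else 0)
                + (if e = p ∧ (false : Bool) = true then ξ (lit p.1 p.2) else 0))
          = x e.1 + ∑ p : Fin m × Fin 3, (if e = p then ξ (lit p.1 p.2) else 0) := by
            simp only [hsome]; norm_num
        _ = x e.1 + ξ (lit e.1 e.2) := by
            rw [Finset.sum_ite_eq Finset.univ e (fun p => ξ (lit p.1 p.2))]
            simp
        _ ≤ (1 - sv e.1) + sv e.1 := add_le_add (hxle e.1) (hξle e.1 e.2)
        _ = 1 := by ring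
end

section
/- Let D ⊆ ℝ^k be a nonempty convex set, let r ∈ ℕ, let J be a finite index set, and for each j ∈ J fix a coordinate v(j) ∈ {1,…,r} and a sign ε(j) ∈ {0,1}. Define P = { (ξ, (d^j)_{j∈J}) ∈ ℝ^r × (ℝ^k)^J : 0 ≤ ξ_i ≤ 1 for all i ∈ {1,…,r}, and for each j ∈ J, d^j ∈ σ_j(ξ)·D, where σ_j(ξ) = ξ_{v(j)} if ε(j) = 1 and σ_j(ξ) = 1 − ξ_{v(j)} if ε(j) = 0 }, where t·D = {t·d : d ∈ D}. Then P is convex, and every extreme point (ξ, (d^j)) of P satisfies ξ_i ∈ {0,1} for every i ∈ {1,…,r}. -/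
open scoped Pointwise

/-- The polytope `P` of pairs `(ξ, (d^j)_{j ∈ J})` with `0 ≤ ξ_i ≤ 1` and, for
each `j`, `d^j ∈ σ_j(ξ) • D` where `σ_j(ξ) = ξ_{v j}` if `ε j = true` and
`σ_j(ξ) = 1 - ξ_{v j}` otherwise. -/
def scaledCopiesSet {k r : ℕ} {J : Type*} (D : Set (Fin k → ℝ))
    (v : J → Fin r) (ε : J → Bool) : Set ((Fin r → ℝ) × (J → Fin k → ℝ)) :=
  {p | (∀ i, 0 ≤ p.1 i ∧ p.1 i ≤ 1) ∧
       ∀ j, p.2 j ∈ (if ε j then p.1 (v j) else 1 - p.1 (v j)) • D}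

/-- **The set `P` is convex and all its extreme points have 0-1 coordinates
`ξ_i`.**  Here `D ⊆ ℝ^k` is a nonempty convex set, `J` a finite index set, and
for each `j ∈ J` the scaling factor is `ξ_{v j}` or `1 - ξ_{v j}` according to
the sign `ε j`. -/
theorem scaledCopiesSet_convex_extremePoints_zero_one
    {k r : ℕ} {J : Type*} [Fintype J]
    (D : Set (Fin k → ℝ)) (hDne : D.Nonempty) (hDconv : Convex ℝ D)
    (v : J → Fin r) (ε : J → Bool) :
    Convex ℝ (scaledCopiesSet D v ε) ∧
      ∀ p ∈ Set.extremePoints ℝ (scaledCopiesSet D v ε),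
        ∀ i, p.1 i = 0 ∨ p.1 i = 1 := by
  constructor
  · -- Convexity
    intro p hp q hq a b ha hb hab
    refine ⟨fun i => ?_, fun j => ?_⟩
    · have h1 := (hp.1 i).1
      have h2 := (hp.1 i).2
      have h3 := (hq.1 i).1
      have h4 := (hq.1 i).2
      constructor
      · have : (0:ℝ) ≤ a * p.1 i + b * q.1 i := by positivity
        simpa using this
      · have : a * p.1 i + b * q.1 i ≤ 1 := by nlinarith
        simpa using this
    · set σp : ℝ := if ε j then p.1 (v j) else 1 - p.1 (v j) with hσp
      set σq : ℝ := if ε j then q.1 (v j) else 1 - q.1 (v j) with hσq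
      have hσp0 : 0 ≤ σp := by
        rcases (hp.1 (v j)) with ⟨h1, h2⟩
        rw [hσp]; split <;> linarith
      have hσq0 : 0 ≤ σq := by
        rcases (hq.1 (v j)) with ⟨h1, h2⟩
        rw [hσq]; split <;> linarith
      have hmem : (a • p + b • q).2 j ∈ (a * σp + b * σq) • D := by
        have hsplit : (a * σp + b * σq) • D = (a * σp) • D + (b * σq) • D :=
          hDconv.add_smul (by positivity) (by positivity)
        rw [hsplit]
        refine Set.add_mem_add ?_ ?_
        · have := Set.smul_mem_smul_set (a := a) (hp.2 j)
          rwa [smul_smul] at this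
        · have := Set.smul_mem_smul_set (a := b) (hq.2 j)
          rwa [smul_smul] at this
      have hkey : (if ε j then (a • p + b • q).1 (v j)
          else 1 - (a • p + b • q).1 (v j)) = a * σp + b * σq := by
        rw [hσp, hσq]
        by_cases hε : ε j <;> simp [hε, Prod.smul_fst]
        linarith
      rw [hkey]
      exact hmem
  · -- Extreme points
    intro p hp i
    by_contra hcon
    push_neg at hcon
    obtain ⟨h0, h1⟩ := hcon
    have hmem := hp.1
    obtain ⟨hb1, hb2⟩ := hmem.1 i
    have hlt0 : 0 < p.1 i := lt_of_le_of_ne hb1 (Ne.symm h0)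
    have hlt1 : p.1 i < 1 := lt_of_le_of_ne hb2 h1
    set t : ℝ := min (p.1 i) (1 - p.1 i) with ht
    have ht0 : 0 < t := lt_min hlt0 (by linarith)
    have ht1 : t ≤ p.1 i := min_le_left _ _
    have ht2 : t ≤ 1 - p.1 i := min_le_right _ _
    -- choose witnesses e j ∈ D
    have hch : ∀ j, ∃ e ∈ D,
        (if ε j then p.1 (v j) else 1 - p.1 (v j)) • e = p.2 j := by
      intro j
      exact hmem.2 j
    choose e he hde using hch
    set ξp : Fin r → ℝ := Function.update p.1 i (p.1 i + t) with hξp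
    set ξm : Fin r → ℝ := Function.update p.1 i (p.1 i - t) with hξm
    set Pp : (Fin r → ℝ) × (J → Fin k → ℝ) :=
      (ξp, fun j => (if ε j then ξp (v j) else 1 - ξp (v j)) • e j) with hPp
    set Pm : (Fin r → ℝ) × (J → Fin k → ℝ) :=
      (ξm, fun j => (if ε j then ξm (v j) else 1 - ξm (v j)) • e j) with hPm
    have hPpmem : Pp ∈ scaledCopiesSet D v ε := by
      refine ⟨fun i' => ?_, fun j => ?_⟩
      · by_cases hii : i' = i
        · subst hii
          simp only [hPp, hξp, Function.update_self]
          constructor <;> linarith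
        · simp only [hPp, hξp, Function.update_of_ne hii]
          exact hmem.1 i'
      · exact Set.smul_mem_smul_set (he j)
    have hPmmem : Pm ∈ scaledCopiesSet D v ε := by
      refine ⟨fun i' => ?_, fun j => ?_⟩
      · by_cases hii : i' = i
        · subst hii
          simp only [hPm, hξm, Function.update_self]
          constructor <;> linarith
        · simp only [hPm, hξm, Function.update_of_ne hii]
          exact hmem.1 i'
      · exact Set.smul_mem_smul_set (he j)
    have hseg : p ∈ openSegment ℝ Pp Pm := by
      refine ⟨1/2, 1/2, by norm_num, by norm_num, by norm_num, ?_⟩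
      have hfst : (1/2 : ℝ) • ξp + (1/2 : ℝ) • ξm = p.1 := by
        funext i'
        by_cases hii : i' = i
        · subst hii
          simp only [hξp, hξm, Pi.add_apply, Pi.smul_apply, Function.update_self,
            smul_eq_mul]
          ring
        · simp only [hξp, hξm, Pi.add_apply, Pi.smul_apply,
            Function.update_of_ne hii, smul_eq_mul]
          ring
      have hsnd : ∀ j, (1/2 : ℝ) • Pp.2 j + (1/2 : ℝ) • Pm.2 j = p.2 j := by
        intro j
        have hsum : (if ε j then ξp (v j) else 1 - ξp (v j)) +
            (if ε j then ξm (v j) else 1 - ξm (v j)) =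
            2 * (if ε j then p.1 (v j) else 1 - p.1 (v j)) := by
          by_cases hii : v j = i
          · rw [hii]
            simp only [hξp, hξm, Function.update_self]
            by_cases hε : ε j <;> simp [hε] <;> ring
          · simp only [hξp, hξm, Function.update_of_ne hii]
            by_cases hε : ε j <;> simp [hε] <;> ring
        calc (1/2 : ℝ) • Pp.2 j + (1/2 : ℝ) • Pm.2 j
            = ((1/2 : ℝ) * ((if ε j then ξp (v j) else 1 - ξp (v j)) +
              (if ε j then ξm (v j) else 1 - ξm (v j)))) • e j := by
              simp only [hPp, hPm, smul_smul]
              rw [mul_add, add_smul]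
          _ = (if ε j then p.1 (v j) else 1 - p.1 (v j)) • e j := by
              rw [hsum]; ring_nf
          _ = p.2 j := hde j
      have : (1/2 : ℝ) • Pp + (1/2 : ℝ) • Pm = p := by
        refine Prod.ext ?_ ?_
        · exact hfst
        · exact funext hsnd
      exact this
    have := (hp.2 hPpmem hPmmem hseg)
    have hcontra : ξp i = p.1 i := congrFun (congrArg Prod.fst this) i
    rw [hξp, Function.update_self] at hcontra
    linarith
end

section
/- Fix ρ ∈ (0,1) and a 3-CNF formula φ with m ≥ 1 clauses over variables x_1,…,x_r. Define the instance (G', H', D') with path-restricted routing: G' has vertices s_1, t_1 and, for each clause i, four vertices a_i, w_{i,1}, w_{i,2}, b_i joined by edges e_{i,1}={a_i,w_{i,1}}, e_{i,2}={w_{i,1},w_{i,2}}, e_{i,3}={w_{i,2},b_i} of capacity 1, an edge e_0 = {s_1,t_1} of capacity mρ, and connector edges {a_i, s_1} and {t_1, b_i} of capacity 2m. The commodities are: h_{i,j} with endpoints those of e_{i,j}, allowed to use only the single-edge path (e_{i,j}); and h_{i,0} with endpoints a_i and b_i, allowed to use only the two paths P_i = (e_{i,1},e_{i,2},e_{i,3})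 and Q_i = ({a_i,s_1}, e_0, {t_1,b_i}). The demand set is D' = { d : ∃ ξ ∈ [0,1]^{literals} with ξ(x_k)+ξ(¬x_k) = 1 ∀k, d_{h_{i,j}} = ξ(l_{i,j}) ∀ i,j∈{1,2,3}, and d_{h_{i,0}} = 1 ∀i }. Then: (a) if val(φ) < ρ, every d ∈ D' admits a path-restricted routing with congestion at most 1; and (b) if val(φ) = 1, every reservation u under which all of D' is routable by path-restricted routings has congestion at least 2/(1+ρ). In particular, each commodity can be routed along at most two given paths, yet the minimum congestion exhibits a multiplicative gap of 2/(1+ρ) between the two cases. -/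
open scoped BigOperators

/-- Path-restricted routability: each commodity `h` may only use the paths in
`paths h` (a path being recorded by its edge set); a routing of `d` under `u`
assigns a nonnegative flow value to each allowed path of each commodity so that
the values of the paths of `h` sum to `d h` and the total value of all paths
containing an edge `e` is at most `u e`. -/
def PathRoutable {E H : Type*} [Fintype H] [DecidableEq E]
    (paths : H → Finset (Finset E)) (d : H → ℝ) (u : E → ℝ) : Prop :=
  ∃ f : H → Finset E → ℝ,
    (∀ h p, 0 ≤ f h p) ∧
    (∀ h p, p ∉ paths h → f h p = 0) ∧
    (∀ h, (∑ p ∈ paths h, f h p) = d h) ∧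
    (∀ e, (∑ h, ∑ p ∈ (paths h).filter (fun p => e ∈ p), f h p) ≤ u e)

/-- Edges of the graph `G'`: `Sum.inl (i, j)` is the clause edge `e_{i,j+1}`,
`Sum.inr (Sum.inl ())` is the edge `e₀ = {s₁, t₁}`, and `Sum.inr (Sum.inr
(i, false))` (resp. `(i, true)`) is the connector edge `{a_i, s₁}` (resp.
`{t₁, b_i}`). -/
abbrev TwoPathEdge (m : ℕ) : Type := (Fin m × Fin 3) ⊕ (Unit ⊕ (Fin m × Bool))

/-- Capacities of `G'`: clause edges have capacity `1`, the edge `e₀` has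
capacity `m·ρ`, and the connector edges have capacity `2m`. -/
noncomputable def twoPathCap (m : ℕ) (ρ : ℝ) : TwoPathEdge m → ℝ
  | Sum.inl _ => 1
  | Sum.inr (Sum.inl _) => (m : ℝ) * ρ
  | Sum.inr (Sum.inr _) => 2 * (m : ℝ)

/-- Commodities of `G'`: `Sum.inl (i, j)` is `h_{i,j+1}` and `Sum.inr i` is
`h_{i,0}`. -/
abbrev TwoPathCom (m : ℕ) : Type := (Fin m × Fin 3) ⊕ Fin m

/-- Allowed paths: commodity `h_{i,j}` may only use the single-edge path
`(e_{i,j})`; commodity `h_{i,0}` may only use `P_i = (e_{i,1}, e_{i,2},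
e_{i,3})` or `Q_i = ({a_i, s₁}, e₀, {t₁, b_i})`. -/
def twoPathPaths (m : ℕ) : TwoPathCom m → Finset (Finset (TwoPathEdge m))
  | Sum.inl (i, j) => {{Sum.inl (i, j)}}
  | Sum.inr i =>
      { {Sum.inl (i, 0), Sum.inl (i, 1), Sum.inl (i, 2)},
        {Sum.inr (Sum.inl ()), Sum.inr (Sum.inr (i, false)),
          Sum.inr (Sum.inr (i, true))} }

/-- The demand set `D'`: demands of the commodities `h_{i,j}` are given by
fractional literal values `ξ` with `ξ(x_k) + ξ(¬x_k) = 1` (where `lit i j`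
encodes the literal `l_{i,j}`), and each commodity `h_{i,0}` has demand `1`. -/
def twoPathD (m r : ℕ) (lit : Fin m → Fin 3 → Fin r × Bool) :
    Set (TwoPathCom m → ℝ) :=
  {d | ∃ ξ : Fin r × Bool → ℝ,
        (∀ l, 0 ≤ ξ l ∧ ξ l ≤ 1) ∧
        (∀ k : Fin r, ξ (k, true) + ξ (k, false) = 1) ∧
        (∀ i j, d (Sum.inl (i, j)) = ξ (lit i j)) ∧
        (∀ i, d (Sum.inr i) = 1)}


open Finset
open Finset

def Ppath (m : ℕ) (i : Fin m) : Finset (TwoPathEdge m) :=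
  {Sum.inl (i, 0), Sum.inl (i, 1), Sum.inl (i, 2)}

def Qpath (m : ℕ) (i : Fin m) : Finset (TwoPathEdge m) :=
  {Sum.inr (Sum.inl ()), Sum.inr (Sum.inr (i, false)), Sum.inr (Sum.inr (i, true))}

lemma Ppath_ne_Qpath (m : ℕ) (i : Fin m) : Ppath m i ≠ Qpath m i := by
  intro h
  have : (Sum.inl (i, 0) : TwoPathEdge m) ∈ Qpath m i := h ▸ (by simp [Ppath])
  simp [Qpath] at this

lemma twoPathPaths_inr (m : ℕ) (i : Fin m) :
    twoPathPaths m (Sum.inr i) = {Ppath m i, Qpath m i} := rfl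

lemma mem_Ppath (m : ℕ) (i i' : Fin m) (j : Fin 3) :
    (Sum.inl (i, j) : TwoPathEdge m) ∈ Ppath m i' ↔ i = i' := by
  fin_cases j <;> simp [Ppath, Prod.ext_iff] <;> tauto

lemma inl_not_mem_Qpath (m : ℕ) (i i' : Fin m) (j : Fin 3) :
    (Sum.inl (i, j) : TwoPathEdge m) ∉ Qpath m i' := by
  simp [Qpath]

lemma e0_not_mem_Ppath (m : ℕ) (i' : Fin m) :
    (Sum.inr (Sum.inl ()) : TwoPathEdge m) ∉ Ppath m i' := by
  simp [Ppath]

lemma e0_mem_Qpath (m : ℕ) (i' : Fin m) :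
    (Sum.inr (Sum.inl ()) : TwoPathEdge m) ∈ Qpath m i' := by
  simp [Qpath]

lemma conn_not_mem_Ppath (m : ℕ) (i i' : Fin m) (b : Bool) :
    (Sum.inr (Sum.inr (i, b)) : TwoPathEdge m) ∉ Ppath m i' := by
  simp [Ppath]

lemma conn_mem_Qpath (m : ℕ) (i i' : Fin m) (b : Bool) :
    (Sum.inr (Sum.inr (i, b)) : TwoPathEdge m) ∈ Qpath m i' ↔ i = i' := by
  cases b <;> simp [Qpath, Prod.ext_iff]

/-- The edge-load sum, decomposed. -/
lemma edge_sum (m : ℕ) (f : TwoPathCom m → Finset (TwoPathEdge m) → ℝ) (e : TwoPathEdge m) :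
    (∑ h, ∑ p ∈ (twoPathPaths m h).filter (fun p => e ∈ p), f h p)
      = (∑ x : Fin m × Fin 3, if e = Sum.inl x then f (Sum.inl x) {Sum.inl x} else 0)
        + ∑ i : Fin m,
            ((if e ∈ Ppath m i then f (Sum.inr i) (Ppath m i) else 0)
              + (if e ∈ Qpath m i then f (Sum.inr i) (Qpath m i) else 0)) := by
  rw [Fintype.sum_sum_type]
  congr 1
  · refine Finset.sum_congr rfl fun x _ => ?_
    rcases x with ⟨i, j⟩
    rw [show twoPathPaths m (Sum.inl (i, j)) = {{Sum.inl (i, j)}} from rfl,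
      Finset.filter_singleton]
    by_cases he : e ∈ ({Sum.inl (i, j)} : Finset (TwoPathEdge m))
    · rw [if_pos he, Finset.sum_singleton, if_pos (by simpa using he)]
    · rw [if_neg he, Finset.sum_empty, if_neg (by simpa using he)]
  · refine Finset.sum_congr rfl fun i _ => ?_
    rw [twoPathPaths_inr, Finset.sum_filter, Finset.sum_pair (Ppath_ne_Qpath m i)]


/-- Marginal of the product weight. -/
lemma marginal_eq {r : ℕ} (ξ : Fin r × Bool → ℝ)
    (hsum : ∀ k : Fin r, ξ (k, true) + ξ (k, false) = 1) (k : Fin r) (b : Bool) :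
    ∑ a : Fin r → Bool, (if a k = b then ∏ k', ξ (k', a k') else 0) = ξ (k, b) := by
  have h1 : ∀ a : Fin r → Bool,
      (∏ k', (if k' = k then (if a k' = b then ξ (k, b) else 0) else ξ (k', a k')))
        = (if a k = b then ∏ k', ξ (k', a k') else 0) := by
    intro a
    by_cases hab : a k = b
    · rw [if_pos hab]
      refine Finset.prod_congr rfl fun k' _ => ?_
      by_cases hk : k' = k
      · subst hk; simp [hab]
      · simp [hk]
    · rw [if_neg hab]
      exact Finset.prod_eq_zero (mem_univ k) (by simp [hab])
  calc ∑ a : Fin r → Bool, (if a k = b then ∏ k', ξ (k', a k') else 0)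
      = ∑ a : Fin r → Bool,
          ∏ k', (if k' = k then (if a k' = b then ξ (k, b) else 0) else ξ (k', a k')) := by
        exact (Finset.sum_congr rfl fun a _ => (h1 a)).symm
    _ = ∏ k', ∑ b', (if k' = k then (if b' = b then ξ (k, b) else 0) else ξ (k', b')) := by
        have := Finset.prod_univ_sum (fun _ : Fin r => (univ : Finset Bool))
          (fun k' b' => (if k' = k then (if b' = b then ξ (k, b) else 0) else ξ (k', b')))
        rw [Fintype.piFinset_univ] at this
        exact this.symm
    _ = ∏ k' : Fin r, (if k' = k then ξ (k, b) else 1) := by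
        refine Finset.prod_congr rfl fun k' _ => ?_
        by_cases hk : k' = k
        · subst hk; cases b <;> simp
        · simp [hk, Fintype.sum_bool, hsum k']
    _ = ξ (k, b) := by rw [Finset.prod_ite_eq' univ k (fun _ => ξ (k, b))]; simp

lemma weight_total {r : ℕ} (ξ : Fin r × Bool → ℝ)
    (hsum : ∀ k : Fin r, ξ (k, true) + ξ (k, false) = 1) :
    ∑ a : Fin r → Bool, ∏ k', ξ (k', a k') = 1 := by
  have := Finset.prod_univ_sum (fun _ : Fin r => (univ : Finset Bool))
    (fun k' b' => ξ (k', b'))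
  rw [Fintype.piFinset_univ] at this
  rw [← this]
  simp [Fintype.sum_bool, hsum]

/-- The key counting lemma. -/
lemma key_count {m r : ℕ} (ρ : ℝ) (lit : Fin m → Fin 3 → Fin r × Bool)
    (ξ : Fin r × Bool → ℝ) (h0 : ∀ l, 0 ≤ ξ l)
    (hsum : ∀ k : Fin r, ξ (k, true) + ξ (k, false) = 1)
    (hval : ∀ a : Fin r → Bool,
      ((Finset.univ.filter
        (fun i : Fin m => ∃ j : Fin 3, a (lit i j).1 = (lit i j).2)).card : ℝ) ≤ ρ * m) :
    ∑ i, max (ξ (lit i 0)) (max (ξ (lit i 1)) (ξ (lit i 2))) ≤ ρ * m := by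
  set w : (Fin r → Bool) → ℝ := fun a => ∏ k', ξ (k', a k') with hw
  have hw0 : ∀ a, 0 ≤ w a := fun a => Finset.prod_nonneg fun k' _ => h0 _
  have hM : ∀ i : Fin m, ∃ j : Fin 3,
      max (ξ (lit i 0)) (max (ξ (lit i 1)) (ξ (lit i 2))) = ξ (lit i j) := by
    intro i
    rcases max_cases (ξ (lit i 0)) (max (ξ (lit i 1)) (ξ (lit i 2))) with ⟨h, _⟩ | ⟨h, _⟩
    · exact ⟨0, h⟩
    · rcases max_cases (ξ (lit i 1)) (ξ (lit i 2)) with ⟨h2, _⟩ | ⟨h2, _⟩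
      · exact ⟨1, by rw [h, h2]⟩
      · exact ⟨2, by rw [h, h2]⟩
  have step1 : ∀ i : Fin m,
      max (ξ (lit i 0)) (max (ξ (lit i 1)) (ξ (lit i 2)))
        ≤ ∑ a : Fin r → Bool,
            (if (∃ j : Fin 3, a (lit i j).1 = (lit i j).2) then w a else 0) := by
    intro i
    obtain ⟨j, hj⟩ := hM i
    rw [hj, ← marginal_eq ξ hsum (lit i j).1 (lit i j).2]
    refine Finset.sum_le_sum fun a _ => ?_
    by_cases hc : a (lit i j).1 = (lit i j).2
    · rw [if_pos hc, if_pos ⟨j, hc⟩]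
    · rw [if_neg hc]; split_ifs with h; exacts [hw0 a, le_rfl]
  calc ∑ i, max (ξ (lit i 0)) (max (ξ (lit i 1)) (ξ (lit i 2)))
      ≤ ∑ i : Fin m, ∑ a : Fin r → Bool,
          (if (∃ j : Fin 3, a (lit i j).1 = (lit i j).2) then w a else 0) :=
        Finset.sum_le_sum fun i _ => step1 i
    _ = ∑ a : Fin r → Bool,
          ((Finset.univ.filter
            (fun i : Fin m => ∃ j : Fin 3, a (lit i j).1 = (lit i j).2)).card : ℝ) * w a := by
        rw [Finset.sum_comm]
        refine Finset.sum_congr rfl fun a _ => ?_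
        rw [← Finset.sum_filter, Finset.sum_const, nsmul_eq_mul]
    _ ≤ ∑ a : Fin r → Bool, (ρ * m) * w a :=
        Finset.sum_le_sum fun a _ => mul_le_mul_of_nonneg_right (hval a) (hw0 a)
    _ = ρ * m := by rw [← Finset.mul_sum, weight_total ξ hsum, mul_one]

/-- **Hardness of minimum congestion with at most two allowed paths per
commodity.**  For the instance `(G', H', D')`:
(a) if every truth assignment satisfies fewer than `ρ·m` clauses, every
`d ∈ D'` admits a path-restricted routing with congestion at most `1` (i.e. it
is routable under the capacities themselves);
(b) if the formula is satisfiable, every reservation under which all of `D'` is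
routable has congestion at least `2 / (1 + ρ)`. -/
theorem twoPath_gap
    (ρ : ℝ) (hρ0 : 0 < ρ) (hρ1 : ρ < 1)
    (m r : ℕ) (hm : 1 ≤ m) (lit : Fin m → Fin 3 → Fin r × Bool) :
    ((∀ a : Fin r → Bool,
        ((Finset.univ.filter
          (fun i : Fin m => ∃ j : Fin 3, a (lit i j).1 = (lit i j).2)).card : ℝ)
          < ρ * m) →
      ∀ d ∈ twoPathD m r lit,
        PathRoutable (twoPathPaths m) d (twoPathCap m ρ)) ∧
    ((∃ a : Fin r → Bool, ∀ i : Fin m, ∃ j : Fin 3, a (lit i j).1 = (lit i j).2) →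
      ∀ u : TwoPathEdge m → ℝ, (∀ e, 0 ≤ u e) →
        (∀ d ∈ twoPathD m r lit, PathRoutable (twoPathPaths m) d u) →
        2 / (1 + ρ) ≤ ⨆ e, u e / twoPathCap m ρ e) := by
  have hm1 : (1 : ℝ) ≤ (m : ℝ) := by exact_mod_cast hm
  constructor
  · -- part (a)
    intro hval d hd
    obtain ⟨ξ, h01, hsum, hd1, hd2⟩ := hd
    set M : Fin m → ℝ := fun i => max (ξ (lit i 0)) (max (ξ (lit i 1)) (ξ (lit i 2))) with hMdef
    have hM0 : ∀ i, 0 ≤ M i := fun i => le_trans (h01 (lit i 0)).1 (le_max_left _ _)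
    have hM1 : ∀ i, M i ≤ 1 := fun i => max_le (h01 _).2 (max_le (h01 _).2 (h01 _).2)
    have hMj : ∀ (i : Fin m) (j : Fin 3), ξ (lit i j) ≤ M i := by
      intro i j
      fin_cases j
      · exact le_max_left _ _
      · exact le_trans (le_max_left _ _) (le_max_right _ _)
      · exact le_trans (le_max_right _ _) (le_max_right _ _)
    have hkey : ∑ i, M i ≤ ρ * m :=
      key_count ρ lit ξ (fun l => (h01 l).1) hsum (fun a => (hval a).le)
    refine ⟨Sum.elim
        (fun x p => if p = {Sum.inl x} then ξ (lit x.1 x.2) else 0)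
        (fun i p => if p = Ppath m i then 1 - M i else if p = Qpath m i then M i else 0),
      ?_, ?_, ?_, ?_⟩
    · rintro (x | i) p
      · simp only [Sum.elim_inl]
        split_ifs
        exacts [(h01 _).1, le_rfl]
      · simp only [Sum.elim_inr]
        split_ifs
        exacts [by linarith [hM1 i], hM0 i, le_rfl]
    · rintro (⟨i, j⟩ | i) p hp
      · simp only [Sum.elim_inl]
        rw [if_neg (by simpa [twoPathPaths] using hp)]
      · rw [twoPathPaths_inr, Finset.mem_insert, Finset.mem_singleton] at hp
        push_neg at hp
        simp only [Sum.elim_inr]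
        rw [if_neg hp.1, if_neg hp.2]
    · rintro (⟨i, j⟩ | i)
      · rw [show twoPathPaths m (Sum.inl (i, j)) = {{Sum.inl (i, j)}} from rfl,
          Finset.sum_singleton]
        simp [hd1 i j]
      · rw [twoPathPaths_inr, Finset.sum_pair (Ppath_ne_Qpath m i)]
        rw [hd2]
        simp [(Ppath_ne_Qpath m i).symm]
    · intro e
      rw [edge_sum]
      rcases e with ⟨i, j⟩ | (u | ⟨i, b⟩)
      · have hS1 : (∑ x : Fin m × Fin 3,
            if (Sum.inl (i, j) : TwoPathEdge m) = Sum.inl x then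
              Sum.elim
                (fun x p => if p = {Sum.inl x} then ξ (lit x.1 x.2) else 0)
                (fun i p => if p = Ppath m i then 1 - M i else if p = Qpath m i then M i else 0)
                (Sum.inl x) {Sum.inl x} else 0) = ξ (lit i j) := by
          simp only [Sum.inl.injEq, Sum.elim_inl]
          rw [Finset.sum_ite_eq univ ((i, j) : Fin m × Fin 3)]
          simp
        rw [hS1]
        have hS2 : (∑ i' : Fin m,
            ((if (Sum.inl (i, j) : TwoPathEdge m) ∈ Ppath m i' then
                Sum.elim
                  (fun x p => if p = {Sum.inl x} then ξ (lit x.1 x.2) else 0)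
                  (fun i p => if p = Ppath m i then 1 - M i else if p = Qpath m i then M i else 0)
                  (Sum.inr i') (Ppath m i') else 0)
              + (if (Sum.inl (i, j) : TwoPathEdge m) ∈ Qpath m i' then
                  Sum.elim
                    (fun x p => if p = {Sum.inl x} then ξ (lit x.1 x.2) else 0)
                    (fun i p => if p = Ppath m i then 1 - M i else if p = Qpath m i then M i else 0)
                    (Sum.inr i') (Qpath m i') else 0)))
            = 1 - M i := by
          have : ∀ i' : Fin m, ((if (Sum.inl (i, j) : TwoPathEdge m) ∈ Ppath m i' then
                Sum.elim
                  (fun x p => if p = {Sum.inl x} then ξ (lit x.1 x.2) else 0)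
                  (fun i p => if p = Ppath m i then 1 - M i else if p = Qpath m i then M i else 0)
                  (Sum.inr i') (Ppath m i') else 0)
              + (if (Sum.inl (i, j) : TwoPathEdge m) ∈ Qpath m i' then
                  Sum.elim
                    (fun x p => if p = {Sum.inl x} then ξ (lit x.1 x.2) else 0)
                    (fun i p => if p = Ppath m i then 1 - M i else if p = Qpath m i then M i else 0)
                    (Sum.inr i') (Qpath m i') else 0))
              = if i = i' then 1 - M i' else 0 := by
            intro i'
            rw [if_neg (inl_not_mem_Qpath m i i' j), add_zero]
            by_cases hii : i = i'
            · rw [if_pos ((mem_Ppath m i i' j).mpr hii), if_pos hii]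
              simp
            · rw [if_neg (fun h => hii ((mem_Ppath m i i' j).mp h)), if_neg hii]
          rw [Finset.sum_congr rfl fun i' _ => this i', Finset.sum_ite_eq univ i]
          simp
        rw [hS2]
        show ξ (lit i j) + (1 - M i) ≤ 1
        linarith [hMj i j]
      · have hS1 : (∑ x : Fin m × Fin 3,
            if (Sum.inr (Sum.inl u) : TwoPathEdge m) = Sum.inl x then
              Sum.elim
                (fun x p => if p = {Sum.inl x} then ξ (lit x.1 x.2) else 0)
                (fun i p => if p = Ppath m i then 1 - M i else if p = Qpath m i then M i else 0)
                (Sum.inl x) {Sum.inl x} else 0) = 0 :=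
          Finset.sum_eq_zero fun x _ => if_neg (by simp)
        rw [hS1, zero_add]
        have hS2 : ∀ i' : Fin m, ((if (Sum.inr (Sum.inl u) : TwoPathEdge m) ∈ Ppath m i' then
              Sum.elim
                (fun x p => if p = {Sum.inl x} then ξ (lit x.1 x.2) else 0)
                (fun i p => if p = Ppath m i then 1 - M i else if p = Qpath m i then M i else 0)
                (Sum.inr i') (Ppath m i') else 0)
            + (if (Sum.inr (Sum.inl u) : TwoPathEdge m) ∈ Qpath m i' then
                Sum.elim
                  (fun x p => if p = {Sum.inl x} then ξ (lit x.1 x.2) else 0)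
                  (fun i p => if p = Ppath m i then 1 - M i else if p = Qpath m i then M i else 0)
                  (Sum.inr i') (Qpath m i') else 0))
            = M i' := by
          intro i'
          have hu : (Sum.inr (Sum.inl u) : TwoPathEdge m) = Sum.inr (Sum.inl ()) := rfl
          rw [hu, if_neg (e0_not_mem_Ppath m i'), if_pos (e0_mem_Qpath m i'), zero_add]
          simp [(Ppath_ne_Qpath m i').symm]
        rw [Finset.sum_congr rfl fun i' _ => hS2 i']
        show ∑ i', M i' ≤ (m : ℝ) * ρ
        linarith [hkey]
      · have hS1 : (∑ x : Fin m × Fin 3,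
            if (Sum.inr (Sum.inr (i, b)) : TwoPathEdge m) = Sum.inl x then
              Sum.elim
                (fun x p => if p = {Sum.inl x} then ξ (lit x.1 x.2) else 0)
                (fun i p => if p = Ppath m i then 1 - M i else if p = Qpath m i then M i else 0)
                (Sum.inl x) {Sum.inl x} else 0) = 0 :=
          Finset.sum_eq_zero fun x _ => if_neg (by simp)
        rw [hS1, zero_add]
        have hS2 : ∀ i' : Fin m, ((if (Sum.inr (Sum.inr (i, b)) : TwoPathEdge m) ∈ Ppath m i' then
              Sum.elim
                (fun x p => if p = {Sum.inl x} then ξ (lit x.1 x.2) else 0)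
                (fun i p => if p = Ppath m i then 1 - M i else if p = Qpath m i then M i else 0)
                (Sum.inr i') (Ppath m i') else 0)
            + (if (Sum.inr (Sum.inr (i, b)) : TwoPathEdge m) ∈ Qpath m i' then
                Sum.elim
                  (fun x p => if p = {Sum.inl x} then ξ (lit x.1 x.2) else 0)
                  (fun i p => if p = Ppath m i then 1 - M i else if p = Qpath m i then M i else 0)
                  (Sum.inr i') (Qpath m i') else 0))
            = if i = i' then M i' else 0 := by
          intro i'
          rw [if_neg (conn_not_mem_Ppath m i i' b), zero_add]
          by_cases hii : i = i'
          · rw [if_pos ((conn_mem_Qpath m i i' b).mpr hii), if_pos hii]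
            simp [(Ppath_ne_Qpath m i').symm]
          · rw [if_neg (fun h => hii ((conn_mem_Qpath m i i' b).mp h)), if_neg hii]
        rw [Finset.sum_congr rfl fun i' _ => hS2 i', Finset.sum_ite_eq univ i]
        show (if i ∈ univ then M i else 0) ≤ 2 * (m : ℝ)
        rw [if_pos (mem_univ i)]
        linarith [hM1 i]
  · -- part (b)
    rintro ⟨a, ha⟩ u hu0 hroute
    set ξa : Fin r × Bool → ℝ := fun l => if a l.1 = l.2 then 1 else 0 with hξa
    set d : TwoPathCom m → ℝ :=
      Sum.elim (fun x => ξa (lit x.1 x.2)) (fun _ => 1) with hdd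
    have hdD : d ∈ twoPathD m r lit := by
      refine ⟨ξa, fun l => ?_, fun k => ?_, fun i j => rfl, fun i => rfl⟩
      · constructor <;> simp only [hξa] <;> split_ifs <;> norm_num
      · simp only [hξa]
        cases h : a k <;> simp [h]
    obtain ⟨f, hf0, hfsupp, hfd, hfe⟩ := hroute d hdD
    set C : ℝ := ⨆ e, u e / twoPathCap m ρ e with hC
    have hbdd : BddAbove (Set.range fun e => u e / twoPathCap m ρ e) :=
      Set.Finite.bddAbove (Set.finite_range _)
    have hcap_pos : ∀ e, 0 < twoPathCap m ρ e := by
      rintro (x | (v | z)) <;> simp only [twoPathCap] <;> positivity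
    have hCe : ∀ e, u e ≤ C * twoPathCap m ρ e := by
      intro e
      have h1 : u e / twoPathCap m ρ e ≤ C := le_ciSup hbdd e
      exact (div_le_iff₀ (hcap_pos e)).mp h1
    -- for each clause i, the Q-flow is at least 2 - C
    have hQbig : ∀ i : Fin m, 2 - C ≤ f (Sum.inr i) (Qpath m i) := by
      intro i
      obtain ⟨j, hj⟩ := ha i
      have hPQsum : f (Sum.inr i) (Ppath m i) + f (Sum.inr i) (Qpath m i) = 1 := by
        have := hfd (Sum.inr i)
        rw [twoPathPaths_inr, Finset.sum_pair (Ppath_ne_Qpath m i)] at this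
        simpa [hdd] using this
      have hsing : f (Sum.inl (i, j)) {Sum.inl (i, j)} = 1 := by
        have := hfd (Sum.inl (i, j))
        rw [show twoPathPaths m (Sum.inl (i, j)) = {{Sum.inl (i, j)}} from rfl,
          Finset.sum_singleton] at this
        rw [this]
        simp only [hdd, Sum.elim_inl, hξa]
        rw [if_pos hj]
      -- lower bound the load on edge e_{i,j}
      have hload := hfe (Sum.inl (i, j))
      rw [edge_sum] at hload
      have hS1 : f (Sum.inl (i, j)) {Sum.inl (i, j)}
          ≤ ∑ x : Fin m × Fin 3,
              if (Sum.inl (i, j) : TwoPathEdge m) = Sum.inl x then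
                f (Sum.inl x) {Sum.inl x} else 0 := by
        have : (∑ x : Fin m × Fin 3,
            if (Sum.inl (i, j) : TwoPathEdge m) = Sum.inl x then
              f (Sum.inl x) {Sum.inl x} else 0) = f (Sum.inl (i, j)) {Sum.inl (i, j)} := by
          simp only [Sum.inl.injEq]
          rw [Finset.sum_ite_eq univ ((i, j) : Fin m × Fin 3)]
          simp
        rw [this]
      have hS2 : f (Sum.inr i) (Ppath m i)
          ≤ ∑ i' : Fin m,
              ((if (Sum.inl (i, j) : TwoPathEdge m) ∈ Ppath m i' then
                  f (Sum.inr i') (Ppath m i') else 0)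
                + (if (Sum.inl (i, j) : TwoPathEdge m) ∈ Qpath m i' then
                    f (Sum.inr i') (Qpath m i') else 0)) := by
        have hterm : f (Sum.inr i) (Ppath m i)
            ≤ (if (Sum.inl (i, j) : TwoPathEdge m) ∈ Ppath m i then
                  f (Sum.inr i) (Ppath m i) else 0)
              + (if (Sum.inl (i, j) : TwoPathEdge m) ∈ Qpath m i then
                  f (Sum.inr i) (Qpath m i) else 0) := by
          rw [if_pos ((mem_Ppath m i i j).mpr rfl), if_neg (inl_not_mem_Qpath m i i j)]
          simp
        refine le_trans hterm
          (Finset.single_le_sum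
            (f := fun i' : Fin m =>
              (if (Sum.inl (i, j) : TwoPathEdge m) ∈ Ppath m i' then
                  f (Sum.inr i') (Ppath m i') else 0)
                + (if (Sum.inl (i, j) : TwoPathEdge m) ∈ Qpath m i' then
                    f (Sum.inr i') (Qpath m i') else 0)) ?_ (mem_univ i))
        intro i' _
        have h1 : (0:ℝ) ≤ if (Sum.inl (i, j) : TwoPathEdge m) ∈ Ppath m i' then
            f (Sum.inr i') (Ppath m i') else 0 := by
          split_ifs; exacts [hf0 _ _, le_rfl]
        have h2 : (0:ℝ) ≤ if (Sum.inl (i, j) : TwoPathEdge m) ∈ Qpath m i' then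
            f (Sum.inr i') (Qpath m i') else 0 := by
          split_ifs; exacts [hf0 _ _, le_rfl]
        exact add_nonneg h1 h2
      have hcap : twoPathCap m ρ (Sum.inl (i, j)) = 1 := rfl
      have hub := hCe (Sum.inl (i, j))
      rw [hcap, mul_one] at hub
      have : 1 + f (Sum.inr i) (Ppath m i) ≤ C := by
        calc 1 + f (Sum.inr i) (Ppath m i)
            = f (Sum.inl (i, j)) {Sum.inl (i, j)} + f (Sum.inr i) (Ppath m i) := by
              rw [hsing]
          _ ≤ _ + _ := add_le_add hS1 hS2
          _ ≤ u (Sum.inl (i, j)) := hload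
          _ ≤ C := hub
      linarith
    -- the load on e0
    have he0 := hfe (Sum.inr (Sum.inl ()))
    rw [edge_sum] at he0
    have hS1 : (∑ x : Fin m × Fin 3,
        if (Sum.inr (Sum.inl ()) : TwoPathEdge m) = Sum.inl x then
          f (Sum.inl x) {Sum.inl x} else 0) = 0 :=
      Finset.sum_eq_zero fun x _ => if_neg (by simp)
    rw [hS1, zero_add] at he0
    have hS2 : (∑ i' : Fin m,
        ((if (Sum.inr (Sum.inl ()) : TwoPathEdge m) ∈ Ppath m i' then
            f (Sum.inr i') (Ppath m i') else 0)
          + (if (Sum.inr (Sum.inl ()) : TwoPathEdge m) ∈ Qpath m i' then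
              f (Sum.inr i') (Qpath m i') else 0)))
        = ∑ i' : Fin m, f (Sum.inr i') (Qpath m i') := by
      refine Finset.sum_congr rfl fun i' _ => ?_
      rw [if_neg (e0_not_mem_Ppath m i'), if_pos (e0_mem_Qpath m i'), zero_add]
    rw [hS2] at he0
    have hlow : (m : ℝ) * (2 - C) ≤ ∑ i' : Fin m, f (Sum.inr i') (Qpath m i') := by
      calc (m : ℝ) * (2 - C) = ∑ _i' : Fin m, (2 - C) := by
            rw [Finset.sum_const, Finset.card_univ, Fintype.card_fin, nsmul_eq_mul]
        _ ≤ _ := Finset.sum_le_sum fun i' _ => hQbig i'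
    have hub := hCe (Sum.inr (Sum.inl ()))
    have hcape0 : twoPathCap m ρ (Sum.inr (Sum.inl ())) = (m : ℝ) * ρ := rfl
    rw [hcape0] at hub
    have hfinal : (m : ℝ) * (2 - C) ≤ C * ((m : ℝ) * ρ) := le_trans (le_trans hlow he0) hub
    rw [div_le_iff₀ (by linarith : (0 : ℝ) < 1 + ρ)]
    nlinarith [hfinal, hm1, hρ0]
end

section
/- Fix a finite undirected graph G with edge set E, strictly positive capacities c ∈ ℝ_{>0}^E, a finite commodity set H such that for every h ∈ H the endpoints s(h), t(h) lie in the same connected component of G, and a nonempty compact convex demand set D ⊆ ℝ_{≥0}^H. Let cong_stat = inf_{u ∈ U_stat(D)} max_{e∈E} u(e)/c(e) and cong_dyn = inf_{u ∈ U(D)} max_{e∈E} u(e)/c(e). Then there exists λ ∈ ℝ_{≥0}^E with Σ_{e∈E} λ(e)·c(e) = 1 such that inf_{u ∈ U_stat(D)} Σ_{e∈E} λ(e)·u(e) = cong_stat and inf_{u ∈ U(D)} Σ_{e∈E} λ(e)·u(e) ≤ cong_dyn. In particular, if cong_dyn > 0 and inf_{u ∈ U(D)} Σ_e λ(e)·u(e)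 > 0, then the ratio of the optimal static linear reservation cost to the optimal dynamic linear reservation cost for the cost vector λ is at least cong_stat / cong_dyn. -/
open scoped BigOperators

/-- A static routing template: for every commodity `h`, a nonnegative flow
`x h` shipping one unit from `s h` to `t h`. -/
def IsUnitTemplate {V E H : Type*} [Fintype E] [DecidableEq V]
    (src dst : E → V) (s t : H → V) (x : H → E → Bool → ℝ) : Prop :=
  (∀ h e b, 0 ≤ x h e b) ∧
  (∀ h v, v ≠ s h → v ≠ t h → netOut src dst (x h) v = 0) ∧
  (∀ h, netOut src dst (x h) (s h) = 1)

/-- The set of reservations within which some static routing template serves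
every demand vector of `D`: the flow of commodity `h` is `d h • x h`, and for
every edge `e` and every `d ∈ D` the total flow on `e` is at most `u e`. -/
def UsetStat {V E H : Type*} [Fintype E] [Fintype H] [DecidableEq V]
    (src dst : E → V) (s t : H → V) (D : Set (H → ℝ)) : Set (E → ℝ) :=
  {u | (∀ e, 0 ≤ u e) ∧ ∃ x, IsUnitTemplate src dst s t x ∧
    ∀ d ∈ D, ∀ e, (∑ h, d h * (x h e true + x h e false)) ≤ u e}

lemma netOut_comb {V E : Type*} [Fintype E] [DecidableEq V]
    (src dst : E → V) (f g : E → Bool → ℝ) (a b : ℝ) (v : V) :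
    netOut src dst (fun e bb => a * f e bb + b * g e bb) v
      = a * netOut src dst f v + b * netOut src dst g v := by
  simp only [netOut, Finset.mul_sum, ← Finset.sum_add_distrib]
  refine Finset.sum_congr rfl fun e _ => ?_
  split_ifs <;> ring

lemma lin_le_cong {E : Type*} [Fintype E] [Nonempty E]
    (c : E → ℝ) (hc : ∀ e, 0 < c e)
    (lam : E → ℝ) (hlam : ∀ e, 0 ≤ lam e) (hnorm : ∑ e, lam e * c e = 1)
    (T : Set (E → ℝ)) (hTnn : ∀ u ∈ T, ∀ e, 0 ≤ u e)
    (hTup : ∀ u ∈ T, ∀ w : E → ℝ, (∀ e, u e ≤ w e) → w ∈ T) :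
    sInf ((fun u : E → ℝ => ∑ e, lam e * u e) '' T) ≤
      sInf ((fun u : E → ℝ => ⨆ e, u e / c e) '' T) := by
  rcases T.eq_empty_or_nonempty with rfl | hT
  · simp
  have hbddlin : BddBelow ((fun u : E → ℝ => ∑ e, lam e * u e) '' T) := by
    refine ⟨0, ?_⟩
    rintro z ⟨u, hu, rfl⟩
    exact Finset.sum_nonneg fun e _ => mul_nonneg (hlam e) (hTnn u hu e)
  refine le_csInf (hT.image _) ?_
  rintro z ⟨u, hu, rfl⟩
  set ρ := ⨆ e, u e / c e with hρ
  have hbdd : BddAbove (Set.range fun e => u e / c e) :=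
    (Set.finite_range _).bddAbove
  have hle : ∀ e, u e ≤ ρ * c e := by
    intro e
    have h1 : u e / c e ≤ ρ := le_ciSup hbdd e
    have h2 := (div_le_iff₀ (hc e)).mp h1
    linarith
  have hmem : (fun e => ρ * c e) ∈ T := hTup u hu _ hle
  have hval : ∑ e, lam e * (ρ * c e) = ρ := by
    have h3 : ∑ e, lam e * (ρ * c e) = ρ * ∑ e, lam e * c e := by
      rw [Finset.mul_sum]; exact Finset.sum_congr rfl fun e _ => by ring
    rw [h3, hnorm, mul_one]
  calc sInf ((fun u : E → ℝ => ∑ e, lam e * u e) '' T)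
      ≤ ∑ e, lam e * (ρ * c e) := csInf_le hbddlin ⟨_, hmem, rfl⟩
    _ = ρ := hval

lemma mem_interior_of_upward {E : Type*} [Fintype E] (T : Set (E → ℝ))
    (hTup : ∀ u ∈ T, ∀ w : E → ℝ, (∀ e, u e ≤ w e) → w ∈ T)
    (u : E → ℝ) (hu : u ∈ T) (w : E → ℝ) (r : ℝ) (hr : 0 < r)
    (h : ∀ e, u e + r ≤ w e) : w ∈ interior T := by
  refine mem_interior.2 ⟨Metric.ball w r, ?_, Metric.isOpen_ball, Metric.mem_ball_self hr⟩
  intro z hz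
  refine hTup u hu z fun e => ?_
  have h1 : dist (z e) (w e) ≤ dist z w := dist_le_pi_dist z w e
  have h2 : dist z w < r := by rwa [Metric.mem_ball] at hz
  have h3 : |z e - w e| < r := lt_of_le_of_lt (by rw [← Real.dist_eq]; exact h1) h2
  have h4 := abs_lt.mp h3
  have := h e
  linarith [h4.1]

lemma ratio_step (As Ad Bs Bd : ℝ) (h1 : Bs = As) (h2 : Bd ≤ Ad)
    (hAs : 0 ≤ As) (hBd : 0 < Bd) : As / Ad ≤ Bs / Bd := by
  rw [h1]; exact div_le_div_of_nonneg_left hAs hBd h2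

/-- **From congestion gaps to linear-cost gaps (Lagrangian argument).**
Assume every commodity has its endpoints in the same connected component of the
graph and `D` is a nonempty compact convex set of nonnegative demand vectors.
Then there is a normalized cost vector `λ ≥ 0` (with `∑_e λ e * c e = 1`) whose
optimal static linear reservation cost equals the optimal static congestion
`cong_stat`, while its optimal dynamic linear reservation cost is at most the
optimal dynamic congestion `cong_dyn`; in particular (under positivity) the
static/dynamic linear-cost ratio for `λ` is at least `cong_stat / cong_dyn`. -/
theorem static_over_dynamic_linear_cost_ratio
    {V E H : Type*} [Fintype V] [Fintype E] [Nonempty E] [Fintype H] [DecidableEq V]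
    (src dst : E → V) (s t : H → V)
    (hconn : ∀ h : H, Relation.ReflTransGen
      (fun a b : V => ∃ e, (src e = a ∧ dst e = b) ∨ (src e = b ∧ dst e = a))
      (s h) (t h))
    (c : E → ℝ) (hc : ∀ e, 0 < c e)
    (D : Set (H → ℝ)) (hDne : D.Nonempty) (hDcomp : IsCompact D)
    (hDconv : Convex ℝ D) (hDnn : ∀ d ∈ D, ∀ h, 0 ≤ d h) :
    ∃ lam : E → ℝ, (∀ e, 0 ≤ lam e) ∧ (∑ e, lam e * c e) = 1 ∧
      sInf ((fun u : E → ℝ => ∑ e, lam e * u e) '' UsetStat src dst s t D) =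
        sInf ((fun u : E → ℝ => ⨆ e, u e / c e) '' UsetStat src dst s t D) ∧
      sInf ((fun u : E → ℝ => ∑ e, lam e * u e) '' Uset src dst s t D) ≤
        sInf ((fun u : E → ℝ => ⨆ e, u e / c e) '' Uset src dst s t D) ∧
      (0 < sInf ((fun u : E → ℝ => ⨆ e, u e / c e) '' Uset src dst s t D) →
        0 < sInf ((fun u : E → ℝ => ∑ e, lam e * u e) '' Uset src dst s t D) →
        sInf ((fun u : E → ℝ => ⨆ e, u e / c e) '' UsetStat src dst s t D) /
            sInf ((fun u : E → ℝ => ⨆ e, u e / c e) '' Uset src dst s t D) ≤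
          sInf ((fun u : E → ℝ => ∑ e, lam e * u e) '' UsetStat src dst s t D) /
            sInf ((fun u : E → ℝ => ∑ e, lam e * u e) '' Uset src dst s t D)) := by
  classical
  set S := UsetStat src dst s t D with hSdef
  set U := Uset src dst s t D with hUdef
  -- basic properties
  have hSnn : ∀ u ∈ S, ∀ e, 0 ≤ u e := fun u hu => hu.1
  have hSup : ∀ u ∈ S, ∀ w : E → ℝ, (∀ e, u e ≤ w e) → w ∈ S := by
    rintro u ⟨hnn, x, hx, hbd⟩ w hw
    exact ⟨fun e => le_trans (hnn e) (hw e), x, hx,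
      fun d hd e => le_trans (hbd d hd e) (hw e)⟩
  have hUnn : ∀ u ∈ U, ∀ e, 0 ≤ u e := fun u hu => hu.1
  have hUup : ∀ u ∈ U, ∀ w : E → ℝ, (∀ e, u e ≤ w e) → w ∈ U := by
    rintro u ⟨hnn, hrt⟩ w hw
    refine ⟨fun e => le_trans (hnn e) (hw e), fun d hd => ?_⟩
    obtain ⟨f, h1, h2, h3, h4⟩ := hrt d hd
    exact ⟨f, h1, h2, h3, fun e => le_trans (h4 e) (hw e)⟩
  have hcongnn : ∀ (T : Set (E → ℝ)), (∀ u ∈ T, ∀ e, 0 ≤ u e) →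
      ∀ z ∈ (fun u : E → ℝ => ⨆ e, u e / c e) '' T, 0 ≤ z := by
    rintro T hTnn z ⟨u, hu, rfl⟩
    obtain ⟨e⟩ := (inferInstance : Nonempty E)
    show (0:ℝ) ≤ ⨆ e, u e / c e
    exact le_trans (div_nonneg (hTnn u hu e) (hc e).le)
      (le_ciSup (Set.finite_range fun e => u e / c e).bddAbove e)
  -- case S empty
  by_cases hS : S.Nonempty
  swap
  · rw [Set.not_nonempty_iff_eq_empty] at hS
    obtain ⟨e₀⟩ := (inferInstance : Nonempty E)
    have hlamnn0 : ∀ e, 0 ≤ (Pi.single e₀ (c e₀)⁻¹ : E → ℝ) e := by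
      intro e
      rcases eq_or_ne e e₀ with rfl | he
      · simp [Pi.single_eq_same, inv_nonneg, (hc e).le]
      · simp [Pi.single_apply, he]
    have hnorm0 : ∑ e, (Pi.single e₀ (c e₀)⁻¹ : E → ℝ) e * c e = 1 := by
      rw [Finset.sum_eq_single e₀ (fun b _ hb => by simp [Pi.single_apply, hb])
        (fun h => absurd (Finset.mem_univ e₀) h)]
      simp [Pi.single_eq_same, inv_mul_cancel₀ (hc e₀).ne']
    refine ⟨fun e => (Pi.single e₀ (c e₀)⁻¹ : E → ℝ) e, hlamnn0, by simpa using hnorm0, ?_, ?_, ?_⟩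
    · rw [hS]; simp
    · exact lin_le_cong c hc _ hlamnn0 (by simpa using hnorm0) U hUnn hUup
    · intro _ hBd
      refine ratio_step _ _ _ _ ?_ ?_ ?_ hBd
      · rw [hS]; simp
      · exact lin_le_cong c hc _ hlamnn0 (by simpa using hnorm0) U hUnn hUup
      · exact Real.sInf_nonneg (hcongnn S hSnn)
  -- main case: S nonempty
  obtain ⟨u₀, hu₀⟩ := hS
  have hSne : S.Nonempty := ⟨u₀, hu₀⟩
  -- min capacity
  set cmin := Finset.univ.inf' Finset.univ_nonempty c with hcmin
  have hcminpos : 0 < cmin := (Finset.lt_inf'_iff _).2 fun e _ => hc e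
  have hcminle : ∀ e, cmin ≤ c e := fun e => Finset.inf'_le _ (Finset.mem_univ e)
  -- convexity of S
  have hSconv : Convex ℝ S := by
    rintro u₁ ⟨hnn₁, x₁, ⟨hx1a, hx1b, hx1c⟩, hb₁⟩ u₂ ⟨hnn₂, x₂, ⟨hx2a, hx2b, hx2c⟩, hb₂⟩
      a b ha hb hab
    refine ⟨fun e => ?_, (fun h e bb => a * x₁ h e bb + b * x₂ h e bb), ⟨?_, ?_, ?_⟩, ?_⟩
    · have := add_nonneg (mul_nonneg ha (hnn₁ e)) (mul_nonneg hb (hnn₂ e))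
      simpa using this
    · intro h e bb
      exact add_nonneg (mul_nonneg ha (hx1a h e bb)) (mul_nonneg hb (hx2a h e bb))
    · intro h v hv1 hv2
      rw [netOut_comb, hx1b h v hv1 hv2, hx2b h v hv1 hv2]; ring
    · intro h
      rw [netOut_comb, hx1c h, hx2c h]; linarith
    · intro d hd e
      have h1 := hb₁ d hd e
      have h2 := hb₂ d hd e
      have h3 : ∑ h, d h * ((a * x₁ h e true + b * x₂ h e true) +
          (a * x₁ h e false + b * x₂ h e false))
          = a * ∑ h, d h * (x₁ h e true + x₁ h e false)
            + b * ∑ h, d h * (x₂ h e true + x₂ h e false) := by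
        rw [Finset.mul_sum, Finset.mul_sum, ← Finset.sum_add_distrib]
        exact Finset.sum_congr rfl fun h _ => by ring
      rw [h3]
      have : a * (∑ h, d h * (x₁ h e true + x₁ h e false)) + b * (∑ h, d h * (x₂ h e true + x₂ h e false))
          ≤ a * u₁ e + b * u₂ e :=
        add_le_add (mul_le_mul_of_nonneg_left h1 ha) (mul_le_mul_of_nonneg_left h2 hb)
      simpa using this
  -- the optimal static congestion
  set ρ := sInf ((fun u : E → ℝ => ⨆ e, u e / c e) '' S) with hρdef
  have hcongbdd : BddBelow ((fun u : E → ℝ => ⨆ e, u e / c e) '' S) :=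
    ⟨0, fun z hz => hcongnn S hSnn z hz⟩
  have hρnn : 0 ≤ ρ := Real.sInf_nonneg (hcongnn S hSnn)
  -- ρ • c is not in the interior of S
  have hni : (ρ • c : E → ℝ) ∉ interior S := by
    intro hmem
    obtain ⟨o, ho, hoopen, hxo⟩ := mem_interior.1 hmem
    obtain ⟨ε, hε, hball⟩ := Metric.isOpen_iff.1 hoopen _ hxo
    set δ := ε / (‖c‖ + 1) with hδ
    have hnc : (0:ℝ) < ‖c‖ + 1 := by positivity
    have hδpos : 0 < δ := div_pos hε hnc
    have hd : dist ((ρ - δ) • c : E → ℝ) (ρ • c) < ε := by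
      rw [dist_eq_norm, ← sub_smul]
      have : ρ - δ - ρ = -δ := by ring
      rw [this, norm_smul]
      simp only [norm_neg, Real.norm_eq_abs, abs_of_pos hδpos]
      have hkeyδ : δ * (‖c‖ + 1) = ε := by
        rw [hδ, div_mul_cancel₀ _ hnc.ne']
      nlinarith [hδpos]
    have hmem2 : ((ρ - δ) • c : E → ℝ) ∈ S := ho (hball (Metric.mem_ball.2 hd))
    have hcong2 : (⨆ e, ((ρ - δ) • c : E → ℝ) e / c e) = ρ - δ := by
      have : ∀ e, ((ρ - δ) • c : E → ℝ) e / c e = ρ - δ := fun e => by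
        simp [smul_eq_mul, mul_div_assoc, div_self (hc e).ne']
      simp only [this]
      exact ciSup_const
    have : ρ ≤ ρ - δ := by
      exact csInf_le hcongbdd ⟨_, hmem2, hcong2⟩
    linarith
  -- Hahn-Banach separation
  obtain ⟨f, hHB⟩ := geometric_hahn_banach_open_point (hSconv.interior) isOpen_interior hni
  -- linear expansion of f
  have hf : ∀ u : E → ℝ, f u = ∑ e, u e * f (Pi.single e 1) := by
    intro u
    have h0 : (∑ e, u e • (Pi.single e (1:ℝ) : E → ℝ)) = u := by
      conv_rhs => rw [← Finset.univ_sum_single u]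
      refine Finset.sum_congr rfl fun e _ => ?_
      rw [← Pi.single_smul, smul_eq_mul, mul_one]
    calc f u = f (∑ e, u e • (Pi.single e (1:ℝ) : E → ℝ)) := by rw [h0]
      _ = ∑ e, u e * f (Pi.single e 1) := by
          rw [map_sum]
          exact Finset.sum_congr rfl fun e _ => by rw [map_smul, smul_eq_mul]
  set μ := fun e => -f (Pi.single e (1:ℝ)) with hμdef
  have hKc : f (ρ • c : E → ℝ) = ρ * f c := by rw [map_smul, smul_eq_mul]
  -- μ is nonnegative
  have hμnn : ∀ e, 0 ≤ μ e := by
    intro e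
    by_contra hneg
    push_neg at hneg
    have hφ : 0 < f (Pi.single e (1:ℝ)) := by
      have : μ e < 0 := hneg
      simp only [hμdef] at this
      linarith
    set φ := f (Pi.single e (1:ℝ)) with hφdef
    have hmemt : ∀ tt : ℝ, 0 ≤ tt →
        (u₀ + tt • (Pi.single e (1:ℝ) : E → ℝ) + c) ∈ interior S := by
      intro tt htt
      have hin : (u₀ + tt • (Pi.single e (1:ℝ) : E → ℝ)) ∈ S := by
        refine hSup u₀ hu₀ _ fun e' => ?_
        simp only [Pi.add_apply, Pi.smul_apply, smul_eq_mul]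
        have : 0 ≤ tt * (Pi.single e (1:ℝ) : E → ℝ) e' := by
          rcases eq_or_ne e' e with rfl | he'
          · simp [htt]
          · simp [Pi.single_apply, he']
        linarith
      refine mem_interior_of_upward S hSup _ hin _ cmin hcminpos fun e' => ?_
      simp only [Pi.add_apply]
      linarith [hcminle e']
    have hlt : ∀ tt : ℝ, 0 ≤ tt → f u₀ + tt * φ + f c < ρ * f c := by
      intro tt htt
      have := hHB _ (hmemt tt htt)
      rw [map_add, map_add, map_smul, smul_eq_mul, hKc] at this
      exact this
    set K := ρ * f c with hKdef
    set t0 := max 0 ((K + 1 - f u₀ - f c) / φ) with ht0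
    have ht0nn : 0 ≤ t0 := le_max_left _ _
    have ht0φ : K + 1 - f u₀ - f c ≤ t0 * φ := by
      calc K + 1 - f u₀ - f c = ((K + 1 - f u₀ - f c) / φ) * φ :=
            (div_mul_cancel₀ _ hφ.ne').symm
        _ ≤ t0 * φ := mul_le_mul_of_nonneg_right (le_max_right _ _) hφ.le
    have := hlt t0 ht0nn
    linarith
  -- key inequality: f u ≤ ρ * f c on S
  have hkey : ∀ u ∈ S, f u ≤ ρ * f c := by
    intro u hu
    have hε : ∀ ε : ℝ, 0 < ε → f u + ε * f c < ρ * f c := by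
      intro ε hε
      have hm : (u + ε • c) ∈ interior S := by
        refine mem_interior_of_upward S hSup u hu _ (ε * cmin) (by positivity) fun e => ?_
        simp only [Pi.add_apply, Pi.smul_apply, smul_eq_mul]
        nlinarith [hcminle e]
      have := hHB _ hm
      rw [map_add, map_smul, smul_eq_mul, hKc] at this
      exact this
    by_contra hcon
    push_neg at hcon
    set a := f u - ρ * f c with hadef
    have hapos : 0 < a := by simp only [hadef]; linarith
    set b := |f c| + 1 with hbdef
    have hbpos : 0 < b := by positivity
    have h1 := hε (a / b) (div_pos hapos hbpos)
    have h2 : -(b) ≤ f c := by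
      have := neg_abs_le (f c)
      simp only [hbdef]; linarith
    have h3 : (a / b) * (-b) ≤ (a / b) * f c :=
      mul_le_mul_of_nonneg_left h2 (div_pos hapos hbpos).le
    have h4 : (a / b) * (-b) = -a := by
      field_simp
    linarith
  -- f c < 0
  have hfc : f c < 0 := by
    obtain ⟨z, ⟨u₁, hu₁, rfl⟩, hz⟩ :=
      exists_lt_of_csInf_lt (hSne.image _) (show ρ < ρ + 1 by linarith)
    have hmem1 : (fun e => (ρ + 1) * c e) ∈ S := by
      refine hSup u₁ hu₁ _ fun e => ?_
      have h1 : u₁ e / c e ≤ ⨆ e', u₁ e' / c e' :=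
        le_ciSup (Set.finite_range fun e' => u₁ e' / c e').bddAbove e
      have h2 := (div_le_iff₀ (hc e)).mp h1
      nlinarith [hc e]
    have hmem2 : ((ρ + 2) • c : E → ℝ) ∈ interior S := by
      refine mem_interior_of_upward S hSup _ hmem1 _ cmin hcminpos fun e => ?_
      simp only [Pi.smul_apply, smul_eq_mul]
      linarith [hcminle e]
    have := hHB _ hmem2
    rw [map_smul, smul_eq_mul, hKc] at this
    nlinarith
  set A := ∑ e, μ e * c e with hAdef
  have hA : A = -f c := by
    rw [hAdef, hf c, ← Finset.sum_neg_distrib]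
    exact Finset.sum_congr rfl fun e _ => by simp only [hμdef]; ring
  have hApos : 0 < A := by rw [hA]; linarith
  -- the cost vector
  refine ⟨fun e => μ e / A, fun e => div_nonneg (hμnn e) hApos.le, ?_, ?_, ?_, ?_⟩
  · have h1 : ∑ e, μ e / A * c e = (∑ e, μ e * c e) / A := by
      rw [Finset.sum_div]
      exact Finset.sum_congr rfl fun e _ => by ring
    rw [h1, ← hAdef, div_self hApos.ne']
  all_goals {
    have hnorm : ∑ e, μ e / A * c e = 1 := by
      have h1 : ∑ e, μ e / A * c e = (∑ e, μ e * c e) / A := by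
        rw [Finset.sum_div]
        exact Finset.sum_congr rfl fun e _ => by ring
      rw [h1, ← hAdef, div_self hApos.ne']
    have hlamnn : ∀ e, 0 ≤ μ e / A := fun e => div_nonneg (hμnn e) hApos.le
    have hlow : ∀ u ∈ S, ρ ≤ ∑ e, μ e / A * u e := by
      intro u hu
      have h1 : f u = -(∑ e, μ e * u e) := by
        rw [hf u, ← Finset.sum_neg_distrib]
        exact Finset.sum_congr rfl fun e _ => by simp only [hμdef]; ring
      have h2 := hkey u hu
      have hfc' : f c = -A := by rw [hA]; ring
      rw [h1, hfc'] at h2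
      have h3 : ρ * A ≤ ∑ e, μ e * u e := by nlinarith
      have h4 : ∑ e, μ e / A * u e = (∑ e, μ e * u e) / A := by
        rw [Finset.sum_div]
        exact Finset.sum_congr rfl fun e _ => by ring
      rw [h4, le_div_iff₀ hApos]
      linarith
    have hstat : sInf ((fun u : E → ℝ => ∑ e, μ e / A * u e) '' S) =
        sInf ((fun u : E → ℝ => ⨆ e, u e / c e) '' S) := by
      refine le_antisymm (lin_le_cong c hc _ hlamnn hnorm S hSnn hSup) ?_
      refine le_csInf (hSne.image _) ?_
      rintro z ⟨u, hu, rfl⟩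
      exact hlow u hu
    have hdyn : sInf ((fun u : E → ℝ => ∑ e, μ e / A * u e) '' U) ≤
        sInf ((fun u : E → ℝ => ⨆ e, u e / c e) '' U) :=
      lin_le_cong c hc _ hlamnn hnorm U hUnn hUup
    first
      | exact hstat
      | exact hdyn
      | (intro _ hBd
         exact ratio_step _ _ _ _ hstat hdyn (Real.sInf_nonneg (hcongnn S hSnn)) hBd)
  }
end
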